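/- arXiv:0709.4467 — 3 statements merged into one kernel-verified Lean document; each statement's English description precedes it below -/
import Mathlib

section
/- Suppose at least one of the following holds: (i) liminf_{x→+∞} R(x) > 0; (ii) limsup_{x→+∞} u'(kx)/u'(x) < 1 for some k>1; (iii) limsup_{x→0+} I(λx)/I(x) < +∞ for some λ∈(0,1). Then the Lagrange equation f(λ)=a admits a solution λ>0 for every a>0 if and only if λ₀<+∞; moreover, in that case λ₀=0, i.e., f(λ)<+∞ for every λ>0. -/
open MeasureTheory Filter Set
open scoped ENNReal

noncomputable def Vval {Ω : Type*} [MeasurableSpace Ω] (P : Measure Ω)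
    (ξ : Ω → ℝ) (u : ℝ → ℝ) (a : ℝ) : ℝ≥0∞ :=
  ⨆ (X : Ω → ℝ) (_ : Measurable X) (_ : ∀ᵐ ω ∂P, 0 ≤ X ω)
    (_ : ∫⁻ ω, ENNReal.ofReal (X ω * ξ ω) ∂P = ENNReal.ofReal a),
    ∫⁻ ω, ENNReal.ofReal (u (X ω)) ∂P

/-- `X` is an optimal solution of Problem (P_a): it is feasible (measurable,
nonnegative a.s., satisfying the budget constraint `E[Xξ] = a`) and its expected
utility dominates that of every feasible solution. -/
def IsOptimal {Ω : Type*} [MeasurableSpace Ω] (P : Measure Ω)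
    (ξ : Ω → ℝ) (u : ℝ → ℝ) (a : ℝ) (X : Ω → ℝ) : Prop :=
  Measurable X ∧ (∀ᵐ ω ∂P, 0 ≤ X ω) ∧
    (∫⁻ ω, ENNReal.ofReal (X ω * ξ ω) ∂P = ENNReal.ofReal a) ∧
    ∀ Y : Ω → ℝ, Measurable Y → (∀ᵐ ω ∂P, 0 ≤ Y ω) →
      (∫⁻ ω, ENNReal.ofReal (Y ω * ξ ω) ∂P = ENNReal.ofReal a) →
      ∫⁻ ω, ENNReal.ofReal (u (Y ω)) ∂P ≤ ∫⁻ ω, ENNReal.ofReal (u (X ω)) ∂P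

/-- `fLag P ξ I lam = E[I(λξ)ξ]`, the function whose equation `f(λ) = a`
determines the Lagrange multiplier. -/
noncomputable def fLag {Ω : Type*} [MeasurableSpace Ω] (P : Measure Ω)
    (ξ : Ω → ℝ) (I : ℝ → ℝ) (lam : ℝ) : ℝ≥0∞ :=
  ∫⁻ ω, ENNReal.ofReal (I (lam * ξ ω) * ξ ω) ∂P

theorem lagrange_exists_iff_lam0_finite
    {Ω : Type*} [MeasurableSpace Ω] (P : Measure Ω) [IsProbabilityMeasure P]
    (ξ : Ω → ℝ) (hξmeas : Measurable ξ) (hξpos : ∀ᵐ ω ∂P, 0 < ξ ω)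
    (u u' u'' : ℝ → ℝ) (hu_meas : Measurable u)
    (hu0 : u 0 = 0) (hu_nonneg : ∀ x : ℝ, 0 ≤ x → 0 ≤ u x)
    (hu_mono : StrictMonoOn u (Set.Ici (0:ℝ)))
    (hu_conc : StrictConcaveOn ℝ (Set.Ici (0:ℝ)) u)
    (hu_deriv : ∀ x : ℝ, 0 < x → HasDerivAt u (u' x) x)
    (hu_deriv2 : ∀ x : ℝ, 0 < x → HasDerivAt u' (u'' x) x)
    (hu'_pos : ∀ x : ℝ, 0 < x → 0 < u' x)
    (hu'_zero : Tendsto u' (nhdsWithin 0 (Set.Ioi 0)) atTop)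
    (hu'_top : Tendsto u' atTop (nhds 0))
    (I : ℝ → ℝ) (hI_meas : Measurable I) (hI_pos : ∀ y : ℝ, 0 < y → 0 < I y)
    (hI_left : ∀ x : ℝ, 0 < x → I (u' x) = x)
    (hI_right : ∀ y : ℝ, 0 < y → u' (I y) = y)
    (hcond : (∃ K : ℝ, 0 < K ∧ ∀ᶠ x in atTop, K ≤ -x * u'' x / u' x) ∨
      (∃ k : ℝ, 1 < k ∧ ∃ c : ℝ, c < 1 ∧ ∀ᶠ x in atTop, u' (k * x) / u' x ≤ c) ∨
      (∃ lam : ℝ, 0 < lam ∧ lam < 1 ∧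
        ∃ C : ℝ, ∀ᶠ x in nhdsWithin 0 (Set.Ioi 0), I (lam * x) / I x ≤ C))
    :
    ((∀ a : ℝ, 0 < a → ∃ lam : ℝ, 0 < lam ∧ fLag P ξ I lam = ENNReal.ofReal a) ↔
        (∃ lam : ℝ, 0 < lam ∧ fLag P ξ I lam < ⊤)) ∧
      ((∃ lam : ℝ, 0 < lam ∧ fLag P ξ I lam < ⊤) →
        ∀ lam : ℝ, 0 < lam → fLag P ξ I lam < ⊤) := by
  -- ## Elementary consequences of the hypotheses
  have huc : StrictConcaveOn ℝ (Set.Ioi (0:ℝ)) u :=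
    hu_conc.subset Ioi_subset_Ici_self (convex_Ioi 0)
  -- u' is strictly decreasing on (0,∞)
  have hu'_anti : ∀ a b : ℝ, 0 < a → a < b → u' b < u' a := by
    intro a b ha hab
    have hb : 0 < b := ha.trans hab
    have h1 := huc.lt_slope_of_hasDerivAt (mem_Ioi.2 ha) (mem_Ioi.2 hb) hab (hu_deriv b hb)
    have h2 := huc.slope_lt_of_hasDerivAt (mem_Ioi.2 ha) (mem_Ioi.2 hb) hab (hu_deriv a ha)
    linarith
  -- I is antitone on (0,∞)
  have hI_anti : ∀ a b : ℝ, 0 < a → a ≤ b → I b ≤ I a := by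
    intro a b ha hab
    rcases eq_or_lt_of_le hab with rfl | hab'
    · exact le_rfl
    by_contra hcon
    push_neg at hcon
    have := hu'_anti (I a) (I b) (hI_pos a ha) hcon
    rw [hI_right a ha, hI_right b (ha.trans hab')] at this
    linarith
  -- x * u'(x) ≤ u(x) for x > 0
  have hxu' : ∀ x : ℝ, 0 < x → x * u' x ≤ u x := by
    intro x hx
    have h := (hu_conc.concaveOn).le_slope_of_hasDerivAt (mem_Ici.2 le_rfl)
      (mem_Ici.2 hx.le) hx (hu_deriv x hx)
    have hs : slope u 0 x = u x / x := by
      rw [slope_def_field, hu0, sub_zero, sub_zero]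
    rw [hs, le_div_iff₀ hx] at h
    linarith
  -- z * I(z) ≤ u(I(z₀)) for 0 < z₀ ≤ z
  have hM : ∀ z₀ z : ℝ, 0 < z₀ → z₀ ≤ z → z * I z ≤ u (I z₀) := by
    intro z₀ z h0 hz
    have hz' : 0 < z := h0.trans_le hz
    have hIz := hI_pos z hz'
    have h1 : z * I z = I z * u' (I z) := by rw [hI_right z hz']; ring
    have h2 : I z * u' (I z) ≤ u (I z) := hxu' _ hIz
    have h3 : u (I z) ≤ u (I z₀) :=
      hu_mono.monotoneOn (mem_Ici.2 hIz.le) (mem_Ici.2 (hI_pos z₀ h0).le)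
        (hI_anti z₀ z h0 hz)
    linarith
  -- ## Step A : the doubling-type property of I near 0
  obtain ⟨μ, C, y₀, hμ0, hμ1, hC0, hy₀, hkey⟩ :
      ∃ μ C y₀ : ℝ, 0 < μ ∧ μ < 1 ∧ 0 < C ∧ 0 < y₀ ∧
        ∀ y, 0 < y → y ≤ y₀ → I (μ * y) ≤ C * I y := by
    -- a common template covering conditions (i) and (ii)
    have hshape : ∀ k c x₀ : ℝ, 1 < k → 0 < c → c < 1 → 0 < x₀ →
        (∀ x, x₀ ≤ x → u' (k * x) ≤ c * u' x) →
        ∃ μ C y₀ : ℝ, 0 < μ ∧ μ < 1 ∧ 0 < C ∧ 0 < y₀ ∧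
          ∀ y, 0 < y → y ≤ y₀ → I (μ * y) ≤ C * I y := by
      intro k c x₀ hk hc0 hc1 hx₀ hcd
      refine ⟨c, k, u' x₀, hc0, hc1, by linarith, hu'_pos x₀ hx₀, ?_⟩
      intro y hy hyle
      have hIy := hI_pos y hy
      have hIyx₀ : x₀ ≤ I y := by
        have h := hI_anti y (u' x₀) hy hyle
        rwa [hI_left x₀ hx₀] at h
      have h1 : u' (k * I y) ≤ c * u' (I y) := hcd (I y) hIyx₀
      rw [hI_right y hy] at h1
      have hky : 0 < k * I y := mul_pos (by linarith) hIy
      have h2 : I (c * y) ≤ I (u' (k * I y)) :=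
        hI_anti _ _ (hu'_pos _ hky) h1
      rwa [hI_left _ hky] at h2
    rcases hcond with ⟨K, hK, hev⟩ | ⟨k, hk, c, hc1, hev⟩ | ⟨lam, hl0, hl1, C, hev⟩
    · -- condition (i)
      obtain ⟨x₁, hx₁⟩ := eventually_atTop.mp hev
      set x₀ := max x₁ 1 with hx₀def
      have hx₀1 : (1:ℝ) ≤ x₀ := le_max_right _ _
      have hx₀pos : 0 < x₀ := lt_of_lt_of_le one_pos hx₀1
      -- the auxiliary function log(u') + K log is antitone on [x₀,∞)
      have hgd : ∀ x : ℝ, 0 < x →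
          HasDerivAt (fun z => Real.log (u' z) + K * Real.log z)
            (u'' x / u' x + K * x⁻¹) x := by
        intro x hx
        have h1 : HasDerivAt (fun z => Real.log (u' z)) (u'' x / u' x) x :=
          (hu_deriv2 x hx).log (ne_of_gt (hu'_pos x hx))
        have h2 : HasDerivAt (fun z => K * Real.log z) (K * x⁻¹) x :=
          (Real.hasDerivAt_log (ne_of_gt hx)).const_mul K
        exact h1.add h2
      have hanti : AntitoneOn (fun z => Real.log (u' z) + K * Real.log z) (Ici x₀) := by
        apply antitoneOn_of_deriv_nonpos (convex_Ici x₀)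
        · intro x hx
          have hx0 : 0 < x := lt_of_lt_of_le hx₀pos hx
          exact ((hgd x hx0).continuousAt).continuousWithinAt
        · intro x hx
          rw [interior_Ici] at hx
          exact ((hgd x (hx₀pos.trans hx)).differentiableAt).differentiableWithinAt
        · intro x hx
          rw [interior_Ici] at hx
          have hx0 : 0 < x := hx₀pos.trans hx
          have hu'p := hu'_pos x hx0
          rw [(hgd x hx0).deriv]
          have h := hx₁ x (le_trans (le_max_left _ _) hx.le)
          have h2 : K * u' x ≤ -x * u'' x := (le_div_iff₀ hu'p).1 h
          have heq : u'' x / u' x + K * x⁻¹ = (x * u'' x + K * u' x) / (x * u' x) := by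
            field_simp
          rw [heq]
          apply div_nonpos_of_nonpos_of_nonneg
          · linarith
          · positivity
      have hcd : ∀ x, x₀ ≤ x → u' (2 * x) ≤ (2:ℝ) ^ (-K) * u' x := by
        intro x hx
        have hx0 : 0 < x := lt_of_lt_of_le hx₀pos hx
        have h2x : x ≤ 2 * x := by linarith
        have hg := hanti (mem_Ici.2 hx) (mem_Ici.2 (le_trans hx h2x)) h2x
        simp only at hg
        have hlog2x : Real.log (2 * x) = Real.log 2 + Real.log x :=
          Real.log_mul two_ne_zero (ne_of_gt hx0)
        have hpos1 : 0 < u' (2 * x) := hu'_pos _ (by linarith)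
        have hpos2 : 0 < (2:ℝ) ^ (-K) * u' x :=
          mul_pos (Real.rpow_pos_of_pos two_pos _) (hu'_pos x hx0)
        rw [← Real.log_le_log_iff hpos1 hpos2,
          Real.log_mul (ne_of_gt (Real.rpow_pos_of_pos two_pos _)) (ne_of_gt (hu'_pos x hx0)),
          Real.log_rpow two_pos]
        have hlog2 : 0 < Real.log 2 := Real.log_pos one_lt_two
        nlinarith
      exact hshape 2 ((2:ℝ) ^ (-K)) x₀ one_lt_two (Real.rpow_pos_of_pos two_pos _)
        (Real.rpow_lt_one_of_one_lt_of_neg one_lt_two (by linarith)) hx₀pos hcd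
    · -- condition (ii)
      obtain ⟨x₁, hx₁⟩ := eventually_atTop.mp hev
      set x₀ := max x₁ 1 with hx₀def
      have hx₀1 : (1:ℝ) ≤ x₀ := le_max_right _ _
      have hx₀pos : 0 < x₀ := lt_of_lt_of_le one_pos hx₀1
      have hcd : ∀ x, x₀ ≤ x → u' (k * x) ≤ c * u' x := by
        intro x hx
        have hx0 : 0 < x := lt_of_lt_of_le hx₀pos hx
        have h := hx₁ x (le_trans (le_max_left _ _) hx)
        exact (div_le_iff₀ (hu'_pos x hx0)).1 h
      have hc0 : 0 < c := by
        have h := hcd x₀ le_rfl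
        have := hu'_pos (k * x₀) (mul_pos (by linarith) hx₀pos)
        nlinarith [hu'_pos x₀ hx₀pos]
      exact hshape k c x₀ hk hc0 hc1 hx₀pos hcd
    · -- condition (iii)
      rw [eventually_nhdsWithin_iff] at hev
      obtain ⟨ε, hε, hball⟩ := Metric.eventually_nhds_iff.mp hev
      have key : ∀ y, 0 < y → y ≤ ε / 2 → I (lam * y) ≤ C * I y := by
        intro y hy hyle
        have hd : dist y 0 < ε := by
          rw [Real.dist_eq, sub_zero, abs_of_pos hy]; linarith
        have h := hball hd (mem_Ioi.2 hy)
        exact (div_le_iff₀ (hI_pos y hy)).1 h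
      have hε2 : 0 < ε / 2 := by linarith
      have hC0 : 0 < C := by
        have h := key (ε / 2) hε2 le_rfl
        have h1 := hI_pos (lam * (ε / 2)) (mul_pos hl0 hε2)
        nlinarith [hI_pos (ε / 2) hε2]
      exact ⟨lam, C, ε / 2, hl0, hl1, hC0, hε2, key⟩
  -- ## measurability helper
  have hmeas : ∀ c : ℝ, Measurable fun ω => ENNReal.ofReal (I (c * ξ ω) * ξ ω) := by
    intro c
    exact ((hI_meas.comp (hξmeas.const_mul c)).mul hξmeas).ennreal_ofReal
  -- ## one-step finiteness propagation
  have hstep : ∀ lam : ℝ, 0 < lam → fLag P ξ I lam < ⊤ → fLag P ξ I (μ * lam) < ⊤ := by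
    intro lam hlam hfin
    have hμlam : 0 < μ * lam := mul_pos hμ0 hlam
    set B : ℝ := u (I (μ * y₀)) / (μ * lam) with hB
    have hMnn : 0 ≤ u (I (μ * y₀)) := hu_nonneg _ (hI_pos _ (mul_pos hμ0 hy₀)).le
    have hBnn : 0 ≤ B := div_nonneg hMnn hμlam.le
    have hptwise : ∀ᵐ ω ∂P, ENNReal.ofReal (I (μ * lam * ξ ω) * ξ ω) ≤
        ENNReal.ofReal C * ENNReal.ofReal (I (lam * ξ ω) * ξ ω) + ENNReal.ofReal B := by
      filter_upwards [hξpos] with ω hω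
      have hlξ : 0 < lam * ξ ω := mul_pos hlam hω
      by_cases hcase : lam * ξ ω ≤ y₀
      · have h1 : I (μ * (lam * ξ ω)) ≤ C * I (lam * ξ ω) := hkey _ hlξ hcase
        have h2 : I (μ * lam * ξ ω) * ξ ω ≤ C * (I (lam * ξ ω) * ξ ω) := by
          rw [mul_assoc μ lam]
          calc I (μ * (lam * ξ ω)) * ξ ω ≤ (C * I (lam * ξ ω)) * ξ ω :=
                mul_le_mul_of_nonneg_right h1 hω.le
            _ = C * (I (lam * ξ ω) * ξ ω) := by ring
        calc ENNReal.ofReal (I (μ * lam * ξ ω) * ξ ω)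
            ≤ ENNReal.ofReal (C * (I (lam * ξ ω) * ξ ω)) := ENNReal.ofReal_le_ofReal h2
          _ = ENNReal.ofReal C * ENNReal.ofReal (I (lam * ξ ω) * ξ ω) :=
              ENNReal.ofReal_mul hC0.le
          _ ≤ ENNReal.ofReal C * ENNReal.ofReal (I (lam * ξ ω) * ξ ω) + ENNReal.ofReal B :=
              le_self_add
      · push_neg at hcase
        have hz : μ * y₀ ≤ μ * lam * ξ ω := by
          rw [mul_assoc]
          exact mul_le_mul_of_nonneg_left hcase.le hμ0.le
        have h3 : (μ * lam * ξ ω) * I (μ * lam * ξ ω) ≤ u (I (μ * y₀)) :=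
          hM (μ * y₀) _ (mul_pos hμ0 hy₀) hz
        have h4 : I (μ * lam * ξ ω) * ξ ω ≤ B := by
          rw [hB, le_div_iff₀ hμlam]
          calc I (μ * lam * ξ ω) * ξ ω * (μ * lam) = (μ * lam * ξ ω) * I (μ * lam * ξ ω) := by
                ring
            _ ≤ u (I (μ * y₀)) := h3
        calc ENNReal.ofReal (I (μ * lam * ξ ω) * ξ ω) ≤ ENNReal.ofReal B :=
              ENNReal.ofReal_le_ofReal h4
          _ ≤ ENNReal.ofReal C * ENNReal.ofReal (I (lam * ξ ω) * ξ ω) + ENNReal.ofReal B :=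
              le_add_self
    have hint : fLag P ξ I (μ * lam) ≤ ENNReal.ofReal C * fLag P ξ I lam + ENNReal.ofReal B := by
      have h1 : fLag P ξ I (μ * lam) ≤ ∫⁻ ω,
          (ENNReal.ofReal C * ENNReal.ofReal (I (lam * ξ ω) * ξ ω) + ENNReal.ofReal B) ∂P :=
        lintegral_mono_ae hptwise
      rw [lintegral_add_right _ measurable_const, lintegral_const_mul _ (hmeas lam),
        lintegral_const, measure_univ, mul_one] at h1
      exact h1
    refine lt_of_le_of_lt hint ?_
    exact ENNReal.add_lt_top.2 ⟨ENNReal.mul_lt_top ENNReal.ofReal_lt_top hfin,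
      ENNReal.ofReal_lt_top⟩
  -- ## fLag is antitone
  have hanti_f : ∀ a b : ℝ, 0 < a → a ≤ b → fLag P ξ I b ≤ fLag P ξ I a := by
    intro a b ha hab
    apply lintegral_mono_ae
    filter_upwards [hξpos] with ω hω
    apply ENNReal.ofReal_le_ofReal
    apply mul_le_mul_of_nonneg_right _ hω.le
    exact hI_anti _ _ (mul_pos ha hω) (mul_le_mul_of_nonneg_right hab hω.le)
  -- ## Part 2
  have hpart2 : (∃ lam : ℝ, 0 < lam ∧ fLag P ξ I lam < ⊤) →
      ∀ lam : ℝ, 0 < lam → fLag P ξ I lam < ⊤ := by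
    rintro ⟨l₁, hl₁, hfin⟩ lam hlam
    have hiter : ∀ n : ℕ, fLag P ξ I (μ ^ n * l₁) < ⊤ := by
      intro n
      induction n with
      | zero => simpa using hfin
      | succ n ih =>
        have heq : μ ^ (n + 1) * l₁ = μ * (μ ^ n * l₁) := by ring
        rw [heq]
        exact hstep _ (mul_pos (pow_pos hμ0 n) hl₁) ih
    obtain ⟨n, hn⟩ := exists_pow_lt_of_lt_one (div_pos hlam hl₁) hμ1
    have h1 : μ ^ n * l₁ ≤ lam := ((lt_div_iff₀ hl₁).1 hn).le
    exact lt_of_le_of_lt (hanti_f _ _ (mul_pos (pow_pos hμ0 n) hl₁) h1) (hiter n)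
  -- ## limits of I
  have hI_tendsto_top : Tendsto I (nhdsWithin 0 (Set.Ioi 0)) atTop := by
    rw [tendsto_atTop]
    intro b
    have hx' : 0 < max b 1 := lt_of_lt_of_le one_pos (le_max_right b 1)
    filter_upwards [Ioc_mem_nhdsGT (hu'_pos _ hx')] with y hy
    have h := hI_anti y _ hy.1 hy.2
    rw [hI_left _ hx'] at h
    exact le_trans (le_max_left b 1) h
  have hI_tendsto_zero : Tendsto I atTop (nhds (0:ℝ)) := by
    rw [tendsto_order]
    constructor
    · intro b hb
      filter_upwards [eventually_ge_atTop (1:ℝ)] with y hy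
      exact lt_of_lt_of_le hb (hI_pos y (lt_of_lt_of_le one_pos hy)).le
    · intro b hb
      have hb2 : 0 < b / 2 := by linarith
      filter_upwards [eventually_ge_atTop (max (u' (b / 2)) 1)] with y hy
      have h := hI_anti (u' (b / 2)) y (hu'_pos _ hb2) (le_trans (le_max_left _ _) hy)
      rw [hI_left _ hb2] at h
      linarith
  -- ## continuity of I on (0,∞)
  have hI_cont : ∀ t : ℝ, 0 < t → ContinuousAt I t := by
    intro t ht
    have hIt := hI_pos t ht
    rw [ContinuousAt, tendsto_order]
    constructor
    · intro b hb
      have hmax : 0 ≤ max b 0 := le_max_right b 0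
      have hx'0 : 0 < (max b 0 + I t) / 2 := by linarith
      have hx'lt : (max b 0 + I t) / 2 < I t := by
        have : max b 0 < I t := max_lt hb hIt
        linarith
      have hbx' : b < (max b 0 + I t) / 2 := by
        have h1 : b ≤ max b 0 := le_max_left _ _
        linarith
      have hu'x' : t < u' ((max b 0 + I t) / 2) := by
        have h := hu'_anti _ (I t) hx'0 hx'lt
        rwa [hI_right t ht] at h
      filter_upwards [Ioo_mem_nhds ht hu'x'] with y hy
      have h := hI_anti y (u' ((max b 0 + I t) / 2)) hy.1 hy.2.le
      rw [hI_left _ hx'0] at h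
      linarith
    · intro b hb
      have hx'0 : 0 < (I t + b) / 2 := by linarith
      have hltx' : I t < (I t + b) / 2 := by linarith
      have hx'b : (I t + b) / 2 < b := by linarith
      have hu'x' : u' ((I t + b) / 2) < t := by
        have h := hu'_anti (I t) _ hIt hltx'
        rwa [hI_right t ht] at h
      filter_upwards [Ioo_mem_nhds hu'x' (lt_add_one t)] with y hy
      have h := hI_anti (u' ((I t + b) / 2)) y (hu'_pos _ hx'0) hy.1.le
      rw [hI_left _ hx'0] at h
      linarith
  -- ## Conclusion
  refine ⟨⟨?_, ?_⟩, hpart2⟩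
  · intro hall
    obtain ⟨lam, hlam, heq⟩ := hall 1 one_pos
    exact ⟨lam, hlam, by rw [heq]; exact ENNReal.ofReal_lt_top⟩
  · intro hex a ha
    have hfin := hpart2 hex
    -- find λb with fLag λb < ofReal a
    have hb_seq : Tendsto (fun n : ℕ => fLag P ξ I (1 + (n:ℝ))) atTop (nhds 0) := by
      have h0 : (0:ℝ≥0∞) = ∫⁻ _ω, (0:ℝ≥0∞) ∂P := by simp
      rw [h0]
      apply tendsto_lintegral_of_dominated_convergence
        (fun ω => ENNReal.ofReal (I (1 * ξ ω) * ξ ω))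
      · intro n; exact hmeas _
      · intro n
        filter_upwards [hξpos] with ω hω
        apply ENNReal.ofReal_le_ofReal
        apply mul_le_mul_of_nonneg_right _ hω.le
        apply hI_anti _ _ (by simpa using hω)
        apply mul_le_mul_of_nonneg_right _ hω.le
        simpa using (Nat.cast_nonneg n : (0:ℝ) ≤ n)
      · exact (hfin 1 one_pos).ne
      · filter_upwards [hξpos] with ω hω
        have h1 : Tendsto (fun n : ℕ => (1 + (n:ℝ)) * ξ ω) atTop atTop := by
          apply Tendsto.atTop_mul_const hω
          exact tendsto_atTop_add_const_left _ 1 tendsto_natCast_atTop_atTop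
        have h2 := hI_tendsto_zero.comp h1
        have h3 : Tendsto (fun n : ℕ => I ((1 + (n:ℝ)) * ξ ω) * ξ ω) atTop (nhds (0 * ξ ω)) :=
          h2.mul_const _
        rw [zero_mul] at h3
        simpa using ENNReal.tendsto_ofReal h3
    have hexb : ∃ n : ℕ, fLag P ξ I (1 + (n:ℝ)) < ENNReal.ofReal a := by
      have := hb_seq.eventually (eventually_lt_nhds (ENNReal.ofReal_pos.2 ha))
      exact this.exists
    obtain ⟨nb, hnb⟩ := hexb
    -- find λa with ofReal a < fLag λa
    have hliminf : (⊤:ℝ≥0∞) ≤ liminf (fun n : ℕ => fLag P ξ I ((1/2) ^ n)) atTop := by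
      have hae : ∀ᵐ ω ∂P, liminf
          (fun n : ℕ => ENNReal.ofReal (I ((1/2:ℝ) ^ n * ξ ω) * ξ ω)) atTop = ⊤ := by
        filter_upwards [hξpos] with ω hω
        have h1 : Tendsto (fun n : ℕ => (1/2:ℝ) ^ n * ξ ω) atTop
            (nhdsWithin 0 (Set.Ioi 0)) := by
          apply tendsto_nhdsWithin_of_tendsto_nhds_of_eventually_within
          · have := (tendsto_pow_atTop_nhds_zero_of_lt_one (by norm_num : (0:ℝ) ≤ 1/2)
              (by norm_num : (1/2:ℝ) < 1)).mul_const (ξ ω)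
            simpa using this
          · exact Eventually.of_forall fun n =>
              mul_pos (pow_pos (by norm_num) n) hω
        have h2 := hI_tendsto_top.comp h1
        have h3 : Tendsto (fun n : ℕ => I ((1/2:ℝ) ^ n * ξ ω) * ξ ω) atTop atTop :=
          h2.atTop_mul_const hω
        have h4 := ENNReal.tendsto_ofReal_atTop.comp h3
        exact h4.liminf_eq
      calc (⊤:ℝ≥0∞) = ∫⁻ ω, liminf
            (fun n : ℕ => ENNReal.ofReal (I ((1/2:ℝ) ^ n * ξ ω) * ξ ω)) atTop ∂P := by
            rw [lintegral_congr_ae hae]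
            simp [lintegral_const]
        _ ≤ liminf (fun n : ℕ => fLag P ξ I ((1/2) ^ n)) atTop :=
            lintegral_liminf_le fun n => hmeas _
    have hexa : ∃ n : ℕ, ENNReal.ofReal a < fLag P ξ I ((1/2) ^ n) := by
      have := eventually_lt_of_lt_liminf
        (lt_of_lt_of_le (ENNReal.ofReal_lt_top : ENNReal.ofReal a < ⊤) hliminf)
      exact this.exists
    obtain ⟨na, hna⟩ := hexa
    set la : ℝ := (1/2) ^ na with hla
    set lb : ℝ := 1 + nb with hlb
    have hla0 : 0 < la := pow_pos (by norm_num) _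
    have hla1 : la ≤ 1 := pow_le_one₀ (by norm_num) (by norm_num)
    have hlb1 : (1:ℝ) ≤ lb := by
      rw [hlb]
      simpa using (Nat.cast_nonneg nb : (0:ℝ) ≤ nb)
    have hab : la ≤ lb := le_trans hla1 hlb1
    -- continuity of fLag on [la, lb]
    have hcont : ContinuousOn (fun t => fLag P ξ I t) (Icc la lb) := by
      intro t ht
      have ht0 : 0 < t := lt_of_lt_of_le hla0 ht.1
      have : Tendsto (fun s => fLag P ξ I s) (nhdsWithin t (Icc la lb))
          (nhds (fLag P ξ I t)) := by
        rw [tendsto_iff_seq_tendsto]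
        intro x hx
        have hxt : Tendsto x atTop (nhds t) := hx.mono_right nhdsWithin_le_nhds
        have hmem' : ∀ᶠ n in atTop, x n ∈ Icc la lb := hx self_mem_nhdsWithin
        set x' : ℕ → ℝ := fun n => min (max (x n) la) lb with hx'def
        have hmemx' : ∀ n, la ≤ x' n ∧ x' n ≤ lb := fun n =>
          ⟨le_min (le_max_right _ _) hab, min_le_right _ _⟩
        have hx't : Tendsto x' atTop (nhds t) := by
          have hcont2 : Continuous fun s : ℝ => min (max s la) lb :=
            (continuous_id.max continuous_const).min continuous_const
          have h := (hcont2.tendsto t).comp hxt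
          have ht' : min (max t la) lb = t := by
            rw [max_eq_left ht.1, min_eq_left ht.2]
          rwa [ht'] at h
        have heqx : ∀ᶠ n in atTop, x n = x' n := by
          filter_upwards [hmem'] with n hn
          rw [hx'def]
          simp only
          rw [max_eq_left hn.1, min_eq_left hn.2]
        have hdom : Tendsto (fun n => fLag P ξ I (x' n)) atTop (nhds (fLag P ξ I t)) := by
          apply tendsto_lintegral_of_dominated_convergence
            (fun ω => ENNReal.ofReal (I (la * ξ ω) * ξ ω))
          · intro n; exact hmeas _
          · intro n
            filter_upwards [hξpos] with ω hω
            apply ENNReal.ofReal_le_ofReal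
            apply mul_le_mul_of_nonneg_right _ hω.le
            exact hI_anti _ _ (mul_pos hla0 hω)
              (mul_le_mul_of_nonneg_right (hmemx' n).1 hω.le)
          · exact (hfin la hla0).ne
          · filter_upwards [hξpos] with ω hω
            have h1 : Tendsto (fun n => x' n * ξ ω) atTop (nhds (t * ξ ω)) :=
              hx't.mul_const _
            have h2 := ((hI_cont _ (mul_pos ht0 hω)).tendsto.comp h1).mul_const (ξ ω)
            exact ENNReal.tendsto_ofReal h2
        apply hdom.congr'
        filter_upwards [heqx] with n hn
        simp only [Function.comp_apply]
        rw [hn]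
      exact this
    -- intermediate value theorem
    have hsub := intermediate_value_Icc' hab hcont
    have hmemI : ENNReal.ofReal a ∈ Icc (fLag P ξ I lb) (fLag P ξ I la) := by
      constructor
      · have : fLag P ξ I lb < ENNReal.ofReal a := by
          exact hlb ▸ hnb
        exact this.le
      · exact hna.le
    obtain ⟨lam, hlamIcc, hlameq⟩ := hsub hmemI
    exact ⟨lam, lt_of_lt_of_le hla0 hlamIcc.1, hlameq⟩
end

section
/- Suppose E[ξ^{-α}]<+∞ for every α≥1, and suppose at least one of the following holds: (i) liminf_{x→+∞} R(x) > 0; (ii) limsup_{x→+∞} u'(kx)/u'(x) < 1 for some k>1; (iii) limsup_{x→0+} I(λx)/I(x) < +∞ for some λ∈(0,1). Then E[u(I(ξ))]<+∞, and Problem (P_a) admits an optimal solution (unique up to a.s. equality) for every a>0. -/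
open MeasureTheory Filter Set
open scoped ENNReal

section Tangent
variable {u u' : ℝ → ℝ}

lemma tangent_lt (hu_conc : StrictConcaveOn ℝ (Set.Ici (0:ℝ)) u)
    (hu_deriv : ∀ x : ℝ, 0 < x → HasDerivAt u (u' x) x)
    {x y : ℝ} (hx : 0 < x) (hy : 0 ≤ y) (hne : y ≠ x) :
    u y < u x + u' x * (y - x) := by
  rcases hne.lt_or_gt with h | h
  · have hs := hu_conc.lt_slope_of_hasDerivAt hy (le_of_lt hx) h (hu_deriv x hx)
    rw [slope_def_field] at hs
    have hxy : 0 < x - y := by linarith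
    rw [lt_div_iff₀ hxy] at hs
    nlinarith
  · have hs := hu_conc.slope_lt_of_hasDerivAt (le_of_lt hx) hy h (hu_deriv x hx)
    rw [slope_def_field] at hs
    have hxy : 0 < y - x := by linarith
    rw [div_lt_iff₀ hxy] at hs
    nlinarith

lemma tangent_le (hu_conc : StrictConcaveOn ℝ (Set.Ici (0:ℝ)) u)
    (hu_deriv : ∀ x : ℝ, 0 < x → HasDerivAt u (u' x) x)
    {x y : ℝ} (hx : 0 < x) (hy : 0 ≤ y) :
    u y ≤ u x + u' x * (y - x) := by
  rcases eq_or_ne y x with rfl | hne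
  · simp
  · exact (tangent_lt hu_conc hu_deriv hx hy hne).le

lemma u'_strictAnti (hu_conc : StrictConcaveOn ℝ (Set.Ici (0:ℝ)) u)
    (hu_deriv : ∀ x : ℝ, 0 < x → HasDerivAt u (u' x) x)
    {x y : ℝ} (hx : 0 < x) (hxy : x < y) : u' y < u' x := by
  have h1 := tangent_lt hu_conc hu_deriv hx (by linarith : (0:ℝ) ≤ y) (by linarith : y ≠ x)
  have h2 := tangent_lt hu_conc hu_deriv (by linarith : (0:ℝ) < y) hx.le (by linarith : x ≠ y)
  nlinarith

lemma xu'_lt_u (hu_conc : StrictConcaveOn ℝ (Set.Ici (0:ℝ)) u)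
    (hu_deriv : ∀ x : ℝ, 0 < x → HasDerivAt u (u' x) x) (hu0 : u 0 = 0)
    {x : ℝ} (hx : 0 < x) : x * u' x < u x := by
  have h1 := tangent_lt hu_conc hu_deriv hx (by linarith : (0:ℝ) ≤ x/2) (by linarith : x/2 ≠ x)
  have h2 : (1/2 : ℝ) • u 0 + (1/2 : ℝ) • u x < u ((1/2 : ℝ) • (0:ℝ) + (1/2 : ℝ) • x) := by
    refine hu_conc.2 (Set.mem_Ici.mpr (le_refl 0)) hx.le (by linarith : (0:ℝ) ≠ x) (by norm_num) (by norm_num) (by norm_num)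
  simp only [smul_eq_mul, hu0] at h2
  have : (1/2:ℝ) * 0 + (1/2:ℝ) * x = x/2 := by ring
  rw [this] at h2
  nlinarith
end Tangent


section Cond
variable {u u' u'' : ℝ → ℝ}

lemma cond1_to_ratio
    (hu_deriv2 : ∀ x : ℝ, 0 < x → HasDerivAt u' (u'' x) x)
    (hu'_pos : ∀ x : ℝ, 0 < x → 0 < u' x)
    (h : ∃ K : ℝ, 0 < K ∧ ∀ᶠ x in atTop, K ≤ -x * u'' x / u' x) :
    ∃ k c M : ℝ, 1 < k ∧ 0 < c ∧ c < 1 ∧ 0 < M ∧ ∀ x, M ≤ x → u' (k * x) ≤ c * u' x := by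
  obtain ⟨K, hK, hev⟩ := h
  obtain ⟨M0, hM0⟩ := eventually_atTop.mp hev
  set M := max M0 1 with hM
  have hMpos : (0:ℝ) < M := lt_of_lt_of_le one_pos (le_max_right _ _)
  set h : ℝ → ℝ := fun x => Real.log (u' x) + K * Real.log x with hh
  have hd : ∀ x : ℝ, 0 < x → HasDerivAt h (u'' x / u' x + K * x⁻¹) x := by
    intro x hx
    exact ((hu_deriv2 x hx).log (ne_of_gt (hu'_pos x hx))).add
      ((Real.hasDerivAt_log (ne_of_gt hx)).const_mul K)
  have hanti : AntitoneOn h (Ici M) := by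
    refine antitoneOn_of_deriv_nonpos (convex_Ici M) ?_ ?_ ?_
    · intro x hx
      exact (hd x (lt_of_lt_of_le hMpos hx)).continuousAt.continuousWithinAt
    · intro x hx
      rw [interior_Ici] at hx
      exact (hd x (lt_trans hMpos hx)).differentiableAt.differentiableWithinAt
    · intro x hx
      rw [interior_Ici] at hx
      have hxpos : 0 < x := lt_trans hMpos hx
      rw [(hd x hxpos).deriv]
      have hb := hu'_pos x hxpos
      have hKx : K ≤ -x * u'' x / u' x := hM0 x (le_of_lt (lt_of_le_of_lt (le_max_left _ _) hx))
      rw [le_div_iff₀ hb] at hKx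
      have h1 : u'' x / u' x ≤ -K * x⁻¹ := by
        rw [div_le_iff₀ hb]
        rw [show -K * x⁻¹ * u' x = -(K * u' x) / x by field_simp, le_div_iff₀ hxpos]
        linarith
      linarith
  refine ⟨2, Real.exp (-(K * Real.log 2)), M, one_lt_two, Real.exp_pos _, ?_, hMpos, ?_⟩
  · rw [Real.exp_lt_one_iff]
    have : 0 < Real.log 2 := Real.log_pos one_lt_two
    nlinarith
  · intro x hx
    have hxpos : 0 < x := lt_of_lt_of_le hMpos hx
    have h2x : x ≤ 2 * x := by linarith
    have := hanti (mem_Ici.mpr hx) (mem_Ici.mpr (le_trans hx h2x)) h2x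
    simp only [hh] at this
    have hlog2x : Real.log (2 * x) = Real.log 2 + Real.log x :=
      Real.log_mul (by norm_num) (ne_of_gt hxpos)
    rw [hlog2x] at this
    have hle : Real.log (u' (2 * x)) ≤ Real.log (u' x) + (-(K * Real.log 2)) := by linarith
    have := Real.exp_le_exp.mpr hle
    rw [Real.exp_log (hu'_pos _ (by linarith)), Real.exp_add, Real.exp_log (hu'_pos x hxpos)] at this
    linarith [this]
end Cond


lemma Ipoly {I : ℝ → ℝ}
    (hI_anti : ∀ {a b : ℝ}, 0 < a → a ≤ b → I b ≤ I a)
    (hI_pos : ∀ y : ℝ, 0 < y → 0 < I y)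
    {c k y1 : ℝ} (hc0 : 0 < c) (hc1 : c < 1) (hk : 1 < k) (hy1 : 0 < y1)
    (H : ∀ y, 0 < y → y ≤ y1 → I (c * y) ≤ k * I y) :
    ∃ α C y2 : ℝ, 1 ≤ α ∧ 0 < C ∧ 0 < y2 ∧ y2 ≤ 1 ∧
      ∀ y, 0 < y → y ≤ y2 → I y ≤ C * y ^ (-α) := by
  have hk0 : (0:ℝ) < k := lt_trans one_pos hk
  have hlogk : 0 < Real.log k := Real.log_pos hk
  have hlogc : Real.log c < 0 := Real.log_neg hc0 hc1
  have hlogcinv : 0 < Real.log c⁻¹ := by rw [Real.log_inv]; linarith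
  have hiter : ∀ n : ℕ, I (c ^ n * y1) ≤ k ^ n * I y1 := by
    intro n
    induction n with
    | zero => simp
    | succ n ih =>
      have hcny : 0 < c ^ n * y1 := mul_pos (pow_pos hc0 n) hy1
      have hcny1 : c ^ n * y1 ≤ y1 := by
        have := pow_le_one₀ hc0.le hc1.le (n := n)
        nlinarith
      have h1 : I (c * (c ^ n * y1)) ≤ k * I (c ^ n * y1) := H _ hcny hcny1
      have h2 : k * I (c ^ n * y1) ≤ k * (k ^ n * I y1) :=
        mul_le_mul_of_nonneg_left ih hk0.le
      calc I (c ^ (n+1) * y1) = I (c * (c ^ n * y1)) := by ring_nf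
        _ ≤ k * (k ^ n * I y1) := le_trans h1 h2
        _ = k ^ (n+1) * I y1 := by ring
  set α₀ : ℝ := Real.log k / Real.log c⁻¹ with hα₀
  have hα₀pos : 0 < α₀ := div_pos hlogk hlogcinv
  set α : ℝ := max α₀ 1 with hα
  set C : ℝ := k * I y1 * y1 ^ α₀ with hC
  have hCpos : 0 < C := by
    have := hI_pos y1 hy1
    have := Real.rpow_pos_of_pos hy1 α₀
    positivity
  refine ⟨α, C, min y1 1, le_max_right _ _, hCpos, lt_min hy1 one_pos, min_le_right _ _, ?_⟩
  intro y hy hyle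
  have hyy1 : y ≤ y1 := le_trans hyle (min_le_left _ _)
  have hy1' : y ≤ 1 := le_trans hyle (min_le_right _ _)
  have hdiv1 : 1 ≤ y1 / y := (one_le_div hy).mpr hyy1
  set s : ℝ := Real.log (y1 / y) / Real.log c⁻¹ with hs
  have hs0 : 0 ≤ s := div_nonneg (Real.log_nonneg hdiv1) hlogcinv.le
  set n : ℕ := ⌈s⌉₊ with hn
  -- c ^ n * y1 ≤ y
  have hcns : c ^ (n:ℝ) ≤ c ^ s := Real.rpow_le_rpow_of_exponent_ge hc0 hc1.le (Nat.le_ceil s)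
  have hcs : c ^ s = y / y1 := by
    rw [Real.rpow_def_of_pos hc0]
    have hlc : Real.log c ≠ 0 := ne_of_lt hlogc
    have h8 : Real.log c * s = -Real.log (y1 / y) := by
      rw [hs, Real.log_inv]
      rw [div_neg, mul_neg, mul_div_assoc', mul_comm, ← mul_div_assoc', div_self hlc, mul_one]
    rw [h8, ← Real.log_inv, inv_div, Real.exp_log (div_pos hy hy1)]
  have hcn : c ^ n * y1 ≤ y := by
    have h1 : (c:ℝ) ^ n ≤ y / y1 := by
      rw [← Real.rpow_natCast c n]; rw [hcs] at hcns; exact hcns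
    calc c ^ n * y1 ≤ (y / y1) * y1 := mul_le_mul_of_nonneg_right h1 hy1.le
      _ = y := by field_simp
  have h2 : I y ≤ I (c ^ n * y1) := hI_anti (mul_pos (pow_pos hc0 n) hy1) hcn
  -- k ^ n ≤ k * (y1/y)^α₀
  have hks : k ^ (s:ℝ) = (y1 / y) ^ α₀ := by
    rw [Real.rpow_def_of_pos hk0, Real.rpow_def_of_pos (div_pos hy1 hy)]
    congr 1
    rw [hs, hα₀]
    field_simp
  have hkn : (k:ℝ) ^ n ≤ k * (y1 / y) ^ α₀ := by
    have h3 : (n:ℝ) ≤ s + 1 := le_of_lt (Nat.ceil_lt_add_one hs0)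
    have h4 : k ^ (n:ℝ) ≤ k ^ (s + 1 : ℝ) := Real.rpow_le_rpow_of_exponent_le hk.le h3
    rw [Real.rpow_add hk0, Real.rpow_one, hks] at h4
    rw [← Real.rpow_natCast k n]
    calc k ^ (n:ℝ) ≤ (y1/y) ^ α₀ * k := h4
      _ = k * (y1/y) ^ α₀ := mul_comm _ _
  have hsplit : (y1 / y) ^ α₀ = y1 ^ α₀ * y ^ (-α₀) := by
    rw [Real.div_rpow hy1.le hy.le, Real.rpow_neg hy.le, div_eq_mul_inv]
  have h5 : I y ≤ C * y ^ (-α₀) := by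
    have h6 : I (c ^ n * y1) ≤ (k * (y1/y) ^ α₀) * I y1 :=
      le_trans (hiter n) (mul_le_mul_of_nonneg_right hkn (hI_pos y1 hy1).le)
    calc I y ≤ (k * (y1/y) ^ α₀) * I y1 := le_trans h2 h6
      _ = C * y ^ (-α₀) := by rw [hsplit, hC]; ring
  have h7 : y ^ (-α₀) ≤ y ^ (-α) :=
    Real.rpow_le_rpow_of_exponent_ge hy hy1' (neg_le_neg (le_max_left _ _))
  calc I y ≤ C * y ^ (-α₀) := h5
    _ ≤ C * y ^ (-α) := mul_le_mul_of_nonneg_left h7 hCpos.le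


open scoped Topology

set_option maxHeartbeats 2000000 in
theorem solvable_of_moments
    {Ω : Type*} [MeasurableSpace Ω] (P : Measure Ω) [IsProbabilityMeasure P]
    (ξ : Ω → ℝ) (hξmeas : Measurable ξ) (hξpos : ∀ᵐ ω ∂P, 0 < ξ ω)
    (u u' u'' : ℝ → ℝ) (hu_meas : Measurable u)
    (hu0 : u 0 = 0) (hu_nonneg : ∀ x : ℝ, 0 ≤ x → 0 ≤ u x)
    (hu_mono : StrictMonoOn u (Set.Ici (0:ℝ)))
    (hu_conc : StrictConcaveOn ℝ (Set.Ici (0:ℝ)) u)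
    (hu_deriv : ∀ x : ℝ, 0 < x → HasDerivAt u (u' x) x)
    (hu_deriv2 : ∀ x : ℝ, 0 < x → HasDerivAt u' (u'' x) x)
    (hu'_pos : ∀ x : ℝ, 0 < x → 0 < u' x)
    (hu'_zero : Tendsto u' (nhdsWithin 0 (Set.Ioi 0)) atTop)
    (hu'_top : Tendsto u' atTop (nhds 0))
    (I : ℝ → ℝ) (hI_meas : Measurable I) (hI_pos : ∀ y : ℝ, 0 < y → 0 < I y)
    (hI_left : ∀ x : ℝ, 0 < x → I (u' x) = x)
    (hI_right : ∀ y : ℝ, 0 < y → u' (I y) = y)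
    (hmom : ∀ α : ℝ, 1 ≤ α → ∫⁻ ω, ENNReal.ofReal (ξ ω ^ (-α)) ∂P < ⊤)
    (hcond : (∃ K : ℝ, 0 < K ∧ ∀ᶠ x in atTop, K ≤ -x * u'' x / u' x) ∨
      (∃ k : ℝ, 1 < k ∧ ∃ c : ℝ, c < 1 ∧ ∀ᶠ x in atTop, u' (k * x) / u' x ≤ c) ∨
      (∃ lam : ℝ, 0 < lam ∧ lam < 1 ∧
        ∃ C : ℝ, ∀ᶠ x in nhdsWithin 0 (Set.Ioi 0), I (lam * x) / I x ≤ C))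
    :
    (∫⁻ ω, ENNReal.ofReal (u (I (ξ ω))) ∂P < ⊤) ∧
      ∀ a : ℝ, 0 < a → ∃ X : Ω → ℝ, IsOptimal P ξ u a X ∧
        ∀ Y : Ω → ℝ, IsOptimal P ξ u a Y → Y =ᵐ[P] X := by
  -- derivative of u is strictly decreasing on positives
  have u'anti : ∀ {x y : ℝ}, 0 < x → x < y → u' y < u' x := fun hx hxy =>
    u'_strictAnti hu_conc hu_deriv hx hxy
  -- I is strictly decreasing / antitone on positives
  have hIstrict : ∀ {a b : ℝ}, 0 < a → a < b → I b < I a := by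
    intro a b ha hab
    by_contra hle
    push_neg at hle
    rcases eq_or_lt_of_le hle with he | hl
    · have h1 := hI_right a ha
      have h2 := hI_right b (lt_trans ha hab)
      rw [he] at h1
      linarith
    · have := u'anti (hI_pos a ha) hl
      rw [hI_right a ha, hI_right b (lt_trans ha hab)] at this
      linarith
  have hIanti : ∀ {a b : ℝ}, 0 < a → a ≤ b → I b ≤ I a := by
    intro a b ha hab
    rcases eq_or_lt_of_le hab with he | hl
    · rw [he]
    · exact (hIstrict ha hl).le
  -- comparison lemmas for I against thresholds
  have hIlt : ∀ {x0 y : ℝ}, 0 < x0 → 0 < y → u' x0 < y → I y < x0 := by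
    intro x0 y hx0 hy h
    by_contra hle
    push_neg at hle
    rcases eq_or_lt_of_le hle with he | hl
    · rw [he, hI_right y hy] at h; linarith
    · have := u'anti hx0 hl
      rw [hI_right y hy] at this
      linarith
  have hIgt : ∀ {x0 y : ℝ}, 0 < x0 → 0 < y → y < u' x0 → x0 < I y := by
    intro x0 y hx0 hy h
    by_contra hle
    push_neg at hle
    rcases eq_or_lt_of_le hle with he | hl
    · rw [← he, hI_right y hy] at h; linarith
    · have := u'anti (hI_pos y hy) hl
      rw [hI_right y hy] at this
      linarith
  -- continuity of I on positives
  have hIcont : ∀ y0 : ℝ, 0 < y0 → ContinuousAt I y0 := by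
    intro y0 hy0
    rw [ContinuousAt]
    refine tendsto_order.2 ⟨?_, ?_⟩
    · intro b hb
      rcases le_or_gt b 0 with hb0 | hb0
      · filter_upwards [eventually_gt_nhds hy0] with y hy
        exact lt_of_le_of_lt hb0 (hI_pos y hy)
      · have h1 : y0 < u' b := by
          have := u'anti hb0 hb
          rwa [hI_right y0 hy0] at this
        filter_upwards [eventually_lt_nhds h1, eventually_gt_nhds hy0] with y h2 h3
        exact hIgt hb0 h3 h2
    · intro b hb
      have hbpos : 0 < b := lt_trans (hI_pos y0 hy0) hb
      have h1 : u' b < y0 := by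
        have := u'anti (hI_pos y0 hy0) hb
        rwa [hI_right y0 hy0] at this
      filter_upwards [eventually_gt_nhds h1] with y h2
      exact hIlt hbpos (lt_trans (hu'_pos b hbpos) h2) h2
  -- the polynomial bound on I near 0
  obtain ⟨α, C, y2, hα1, hCpos, hy2, hy21, hIC⟩ :
      ∃ α C y2 : ℝ, 1 ≤ α ∧ 0 < C ∧ 0 < y2 ∧ y2 ≤ 1 ∧
        ∀ y, 0 < y → y ≤ y2 → I y ≤ C * y ^ (-α) := by
    have fromRatio : ∀ k c M : ℝ, 1 < k → 0 < c → c < 1 → 0 < M →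
        (∀ x, M ≤ x → u' (k * x) ≤ c * u' x) →
        ∃ c' k' y1 : ℝ, 0 < c' ∧ c' < 1 ∧ 1 < k' ∧ 0 < y1 ∧
          ∀ y, 0 < y → y ≤ y1 → I (c' * y) ≤ k' * I y := by
      intro k c M hk hc0 hc1 hM hr
      refine ⟨c, k, u' M, hc0, hc1, hk, hu'_pos M hM, ?_⟩
      intro y hy hyM
      have hIyM : M ≤ I y := by
        rcases eq_or_lt_of_le hyM with he | hl
        · rw [he, hI_left M hM]
        · exact (hIgt hM hy hl).le
      have h1 : u' (k * I y) ≤ c * u' (I y) := hr _ hIyM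
      rw [hI_right y hy] at h1
      by_contra hcon
      push_neg at hcon
      have hkIy : 0 < k * I y := mul_pos (lt_trans one_pos hk) (hI_pos y hy)
      have h2 := u'anti hkIy hcon
      rw [hI_right _ (mul_pos hc0 hy)] at h2
      linarith
    obtain ⟨c, k, y1, hc0, hc1, hk, hy1, H⟩ : ∃ c k y1 : ℝ, 0 < c ∧ c < 1 ∧ 1 < k ∧ 0 < y1 ∧
        ∀ y, 0 < y → y ≤ y1 → I (c * y) ≤ k * I y := by
      rcases hcond with h1 | h2 | h3
      · obtain ⟨k, c, M, hk, hc0, hc1, hM, hr⟩ := cond1_to_ratio hu_deriv2 hu'_pos h1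
        exact fromRatio k c M hk hc0 hc1 hM hr
      · obtain ⟨k, hk, c, hc1, hev⟩ := h2
        obtain ⟨M0, hM0⟩ := eventually_atTop.mp hev
        have hM : (0:ℝ) < max M0 1 := lt_of_lt_of_le one_pos (le_max_right _ _)
        have hc0 : 0 < c :=
          lt_of_lt_of_le (div_pos (hu'_pos _ (mul_pos (lt_trans one_pos hk) hM)) (hu'_pos _ hM))
            (hM0 _ (le_max_left _ _))
        refine fromRatio k c (max M0 1) hk hc0 hc1 hM ?_
        intro x hx
        have hxpos : 0 < x := lt_of_lt_of_le hM hx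
        have h := hM0 x (le_trans (le_max_left _ _) hx)
        rwa [div_le_iff₀ (hu'_pos x hxpos)] at h
      · obtain ⟨lam, hl0, hl1, Cc, hev⟩ := h3
        rw [eventually_nhdsWithin_iff, Metric.eventually_nhds_iff] at hev
        obtain ⟨ε, hε, hx⟩ := hev
        refine ⟨lam, max Cc 2, ε/2, hl0, hl1, lt_of_lt_of_le one_lt_two (le_max_right _ _),
          half_pos hε, ?_⟩
        intro y hy hyε
        have hdist : dist y 0 < ε := by
          rw [Real.dist_eq, sub_zero, abs_of_pos hy]; linarith
        have hq := hx hdist (mem_Ioi.mpr hy)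
        rw [div_le_iff₀ (hI_pos y hy)] at hq
        calc I (lam * y) ≤ Cc * I y := hq
          _ ≤ max Cc 2 * I y := mul_le_mul_of_nonneg_right (le_max_left _ _) (hI_pos y hy).le
    exact Ipoly (fun {a b} ha hab => hIanti ha hab) hI_pos hc0 hc1 hk hy1 H
  -- integrability of I(lξ)
  have hIint : ∀ l : ℝ, 0 < l → ∫⁻ ω, ENNReal.ofReal (I (l * ξ ω)) ∂P < ⊤ := by
    intro l hl
    have hbnd : ∀ᵐ ω ∂P, ENNReal.ofReal (I (l * ξ ω)) ≤
        ENNReal.ofReal (C * l ^ (-α)) * ENNReal.ofReal (ξ ω ^ (-α)) + ENNReal.ofReal (I y2) := by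
      filter_upwards [hξpos] with ω hω
      have hlξ : 0 < l * ξ ω := mul_pos hl hω
      rw [← ENNReal.ofReal_mul (by positivity : (0:ℝ) ≤ C * l ^ (-α))]
      rcases le_or_gt (l * ξ ω) y2 with hle | hlt
      · have h1 : I (l * ξ ω) ≤ C * (l * ξ ω) ^ (-α) := hIC _ hlξ hle
        rw [Real.mul_rpow hl.le hω.le] at h1
        refine le_trans (ENNReal.ofReal_le_ofReal ?_) le_self_add
        calc I (l * ξ ω) ≤ C * (l ^ (-α) * ξ ω ^ (-α)) := h1
          _ = C * l ^ (-α) * ξ ω ^ (-α) := by ring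
      · have h1 : I (l * ξ ω) ≤ I y2 := hIanti hy2 hlt.le
        exact le_trans (ENNReal.ofReal_le_ofReal h1) le_add_self
    have hmrpow : Measurable fun ω => ENNReal.ofReal (ξ ω ^ (-α)) := by
      measurability
    calc ∫⁻ ω, ENNReal.ofReal (I (l * ξ ω)) ∂P
        ≤ ∫⁻ ω, (ENNReal.ofReal (C * l ^ (-α)) * ENNReal.ofReal (ξ ω ^ (-α))
            + ENNReal.ofReal (I y2)) ∂P := lintegral_mono_ae hbnd
      _ = ENNReal.ofReal (C * l ^ (-α)) * ∫⁻ ω, ENNReal.ofReal (ξ ω ^ (-α)) ∂P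
            + ENNReal.ofReal (I y2) * 1 := by
          rw [lintegral_add_left (hmrpow.const_mul _), lintegral_const, measure_univ,
            lintegral_const_mul' _ _ ENNReal.ofReal_ne_top]
      _ < ⊤ := by
          refine ENNReal.add_lt_top.mpr ⟨?_, ?_⟩
          · exact ENNReal.mul_lt_top ENNReal.ofReal_lt_top (hmom α hα1)
          · exact ENNReal.mul_lt_top ENNReal.ofReal_lt_top (by simp)
  -- integrability of u(I(lξ))
  have huint : ∀ l : ℝ, 0 < l → ∫⁻ ω, ENNReal.ofReal (u (I (l * ξ ω))) ∂P < ⊤ := by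
    intro l hl
    have hbnd : ∀ᵐ ω ∂P, ENNReal.ofReal (u (I (l * ξ ω))) ≤
        ENNReal.ofReal (u 1) + ENNReal.ofReal (u' 1) * ENNReal.ofReal (I (l * ξ ω)) := by
      filter_upwards [hξpos] with ω hω
      have hx : 0 < I (l * ξ ω) := hI_pos _ (mul_pos hl hω)
      have ht := tangent_le hu_conc hu_deriv one_pos hx.le
      have h1 : u (I (l * ξ ω)) ≤ u 1 + u' 1 * I (l * ξ ω) := by nlinarith [hu'_pos 1 one_pos]
      calc ENNReal.ofReal (u (I (l * ξ ω))) ≤ ENNReal.ofReal (u 1 + u' 1 * I (l * ξ ω)) :=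
            ENNReal.ofReal_le_ofReal h1
        _ ≤ ENNReal.ofReal (u 1) + ENNReal.ofReal (u' 1 * I (l * ξ ω)) := ENNReal.ofReal_add_le
        _ = _ := by rw [ENNReal.ofReal_mul (hu'_pos 1 one_pos).le]
    have hmI : Measurable fun ω => ENNReal.ofReal (I (l * ξ ω)) :=
      (hI_meas.comp (hξmeas.const_mul l)).ennreal_ofReal
    calc ∫⁻ ω, ENNReal.ofReal (u (I (l * ξ ω))) ∂P ≤
        ∫⁻ ω, (ENNReal.ofReal (u 1) + ENNReal.ofReal (u' 1) * ENNReal.ofReal (I (l * ξ ω))) ∂P :=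
          lintegral_mono_ae hbnd
      _ = ENNReal.ofReal (u 1) * 1
            + ENNReal.ofReal (u' 1) * ∫⁻ ω, ENNReal.ofReal (I (l * ξ ω)) ∂P := by
          rw [lintegral_add_left measurable_const, lintegral_const, measure_univ,
            lintegral_const_mul' _ _ ENNReal.ofReal_ne_top]
      _ < ⊤ := by
          refine ENNReal.add_lt_top.mpr ⟨?_, ?_⟩
          · exact ENNReal.mul_lt_top ENNReal.ofReal_lt_top (by simp)
          · exact ENNReal.mul_lt_top ENNReal.ofReal_lt_top (hIint l hl)
  -- finiteness of fLag
  have hfint : ∀ l : ℝ, 0 < l → fLag P ξ I l < ⊤ := by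
    intro l hl
    have hbnd : ∀ᵐ ω ∂P, ENNReal.ofReal (I (l * ξ ω) * ξ ω) ≤
        ENNReal.ofReal l⁻¹ * ENNReal.ofReal (u (I (l * ξ ω))) := by
      filter_upwards [hξpos] with ω hω
      have hx : 0 < I (l * ξ ω) := hI_pos _ (mul_pos hl hω)
      have h1 := xu'_lt_u hu_conc hu_deriv hu0 hx
      rw [hI_right _ (mul_pos hl hω)] at h1
      have h2 : I (l * ξ ω) * ξ ω ≤ l⁻¹ * u (I (l * ξ ω)) := by
        rw [le_inv_mul_iff₀ hl]
        nlinarith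
      rw [← ENNReal.ofReal_mul (inv_pos.mpr hl).le]
      exact ENNReal.ofReal_le_ofReal h2
    calc fLag P ξ I l ≤ ∫⁻ ω, ENNReal.ofReal l⁻¹ * ENNReal.ofReal (u (I (l * ξ ω))) ∂P :=
        lintegral_mono_ae hbnd
      _ = ENNReal.ofReal l⁻¹ * ∫⁻ ω, ENNReal.ofReal (u (I (l * ξ ω))) ∂P :=
        lintegral_const_mul' _ _ ENNReal.ofReal_ne_top
      _ < ⊤ := ENNReal.mul_lt_top ENNReal.ofReal_lt_top (huint l hl)
  have hFmeas : ∀ l : ℝ, Measurable fun ω => ENNReal.ofReal (I (l * ξ ω) * ξ ω) :=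
    fun l => ((hI_meas.comp (hξmeas.const_mul l)).mul hξmeas).ennreal_ofReal
  refine ⟨by simpa using huint 1 one_pos, ?_⟩
  intro a ha
  -- find a small multiplier with big fLag
  obtain ⟨l1, hl1pos, hl11, hl1big⟩ :
      ∃ l : ℝ, 0 < l ∧ l ≤ 1 ∧ ENNReal.ofReal a ≤ fLag P ξ I l := by
    by_contra hcon
    push_neg at hcon
    have htop : ∀ᵐ ω ∂P, (⨆ n : ℕ, ENNReal.ofReal (I (((n:ℝ)+1)⁻¹ * ξ ω) * ξ ω)) = ⊤ := by
      filter_upwards [hξpos] with ω hω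
      rw [iSup_eq_top]
      intro b hb
      set M : ℝ := max (b.toReal / ξ ω) 1 with hM
      have hMpos : 0 < M := lt_of_lt_of_le one_pos (le_max_right _ _)
      have hu'M : 0 < u' M := hu'_pos M hMpos
      obtain ⟨n, hn⟩ := exists_nat_gt (ξ ω / u' M)
      refine ⟨n, ?_⟩
      have hn1p : (0:ℝ) < (n:ℝ) + 1 := by positivity
      have hy : 0 < ((n:ℝ)+1)⁻¹ * ξ ω := by positivity
      have hlt : ((n:ℝ)+1)⁻¹ * ξ ω < u' M := by
        have hn1 : ξ ω / u' M < (n:ℝ) + 1 := by linarith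
        rw [div_lt_iff₀ hu'M] at hn1
        calc ((n:ℝ)+1)⁻¹ * ξ ω < ((n:ℝ)+1)⁻¹ * (((n:ℝ)+1) * u' M) :=
            mul_lt_mul_of_pos_left hn1 (inv_pos.mpr hn1p)
          _ = u' M := by field_simp
      have hI1 : M < I (((n:ℝ)+1)⁻¹ * ξ ω) := hIgt hMpos hy hlt
      have hval : b.toReal < I (((n:ℝ)+1)⁻¹ * ξ ω) * ξ ω := by
        have h5 : b.toReal / ξ ω ≤ M := le_max_left _ _
        rw [div_le_iff₀ hω] at h5
        nlinarith
      rw [ENNReal.lt_ofReal_iff_toReal_lt hb.ne]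
      exact hval
    have hmeas : ∀ n : ℕ, AEMeasurable
        (fun ω => ENNReal.ofReal (I (((n:ℝ)+1)⁻¹ * ξ ω) * ξ ω)) P :=
      fun n => (hFmeas _).aemeasurable
    have hmono : ∀ᵐ ω ∂P, Monotone
        fun n : ℕ => ENNReal.ofReal (I (((n:ℝ)+1)⁻¹ * ξ ω) * ξ ω) := by
      filter_upwards [hξpos] with ω hω
      intro m n hmn
      refine ENNReal.ofReal_le_ofReal (mul_le_mul_of_nonneg_right ?_ hω.le)
      refine hIanti (mul_pos (by positivity) hω) (mul_le_mul_of_nonneg_right ?_ hω.le)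
      have hm1 : (0:ℝ) < (m:ℝ) + 1 := by positivity
      have hmn' : (m:ℝ) + 1 ≤ (n:ℝ) + 1 := by
        have : (m:ℝ) ≤ (n:ℝ) := Nat.cast_le.mpr hmn
        linarith
      exact inv_anti₀ hm1 hmn'
    have hlint : (⨆ n : ℕ, fLag P ξ I ((n:ℝ)+1)⁻¹) = ⊤ := by
      calc (⨆ n : ℕ, fLag P ξ I ((n:ℝ)+1)⁻¹)
          = ∫⁻ ω, ⨆ n : ℕ, ENNReal.ofReal (I (((n:ℝ)+1)⁻¹ * ξ ω) * ξ ω) ∂P :=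
            (lintegral_iSup' hmeas hmono).symm
        _ = ∫⁻ _, (⊤:ℝ≥0∞) ∂P := lintegral_congr_ae htop
        _ = ⊤ := by simp [lintegral_const]
    have hle : (⨆ n : ℕ, fLag P ξ I ((n:ℝ)+1)⁻¹) ≤ ENNReal.ofReal a := by
      refine iSup_le fun n => (hcon (((n:ℝ)+1)⁻¹) (by positivity) ?_).le
      rw [inv_le_one₀ (by positivity)]
      have : (0:ℝ) ≤ (n:ℝ) := Nat.cast_nonneg n
      linarith
    rw [hlint] at hle
    exact ENNReal.ofReal_ne_top (top_le_iff.mp hle)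
  -- find a large multiplier with small fLag
  obtain ⟨l2, hl21, hl2small⟩ : ∃ l : ℝ, 1 ≤ l ∧ fLag P ξ I l ≤ ENNReal.ofReal a := by
    have htend : Tendsto (fun n : ℕ => fLag P ξ I ((n:ℝ)+1)) atTop (𝓝 0) := by
      have h0 : (𝓝 (0:ℝ≥0∞)) = 𝓝 (∫⁻ _, (0:ℝ≥0∞) ∂P) := by rw [lintegral_zero]
      rw [h0]
      refine tendsto_lintegral_of_dominated_convergence
        (fun ω => ENNReal.ofReal (I (1 * ξ ω) * ξ ω)) (fun n => hFmeas _) ?_ (hfint 1 one_pos).ne ?_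
      · intro n
        filter_upwards [hξpos] with ω hω
        refine ENNReal.ofReal_le_ofReal (mul_le_mul_of_nonneg_right ?_ hω.le)
        refine hIanti (by positivity) (mul_le_mul_of_nonneg_right ?_ hω.le)
        have : (0:ℝ) ≤ (n:ℝ) := Nat.cast_nonneg n
        linarith
      · filter_upwards [hξpos] with ω hω
        have hreal : Tendsto (fun n : ℕ => I (((n:ℝ)+1) * ξ ω) * ξ ω) atTop (𝓝 0) := by
          rw [Metric.tendsto_atTop]
          intro ε hε
          have hεξ : 0 < ε / ξ ω := div_pos hε hω
          obtain ⟨N, hN⟩ := exists_nat_gt (u' (ε / ξ ω) / ξ ω)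
          refine ⟨N, fun n hn => ?_⟩
          have hnN : (N:ℝ) ≤ (n:ℝ) := Nat.cast_le.mpr hn
          have h1 : u' (ε / ξ ω) < ((n:ℝ)+1) * ξ ω := by
            have h6 : u' (ε / ξ ω) / ξ ω < (n:ℝ) + 1 := by linarith
            rw [div_lt_iff₀ hω] at h6
            linarith [h6]
          have h2 : I (((n:ℝ)+1) * ξ ω) < ε / ξ ω := hIlt hεξ (by positivity) h1
          have h3 : 0 < I (((n:ℝ)+1) * ξ ω) := hI_pos _ (by positivity)
          rw [Real.dist_eq, sub_zero, abs_of_pos (by positivity)]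
          calc I (((n:ℝ)+1) * ξ ω) * ξ ω < (ε / ξ ω) * ξ ω :=
              mul_lt_mul_of_pos_right h2 hω
            _ = ε := by field_simp
        have hc : Tendsto ENNReal.ofReal (𝓝 0) (𝓝 (ENNReal.ofReal 0)) :=
          ENNReal.continuous_ofReal.tendsto 0
        simpa [Function.comp_def] using hc.comp hreal
    have hev : ∀ᶠ n : ℕ in atTop, fLag P ξ I ((n:ℝ)+1) < ENNReal.ofReal a :=
      htend.eventually_lt_const (ENNReal.ofReal_pos.mpr ha)
    obtain ⟨n, hn⟩ := hev.exists
    refine ⟨(n:ℝ)+1, ?_, hn.le⟩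
    have : (0:ℝ) ≤ (n:ℝ) := Nat.cast_nonneg n
    linarith
  -- continuity of fLag on [l1, l2]
  have hcont : ContinuousOn (fLag P ξ I) (Icc l1 l2) := by
    intro l0 hl0
    have hl0pos : 0 < l0 := lt_of_lt_of_le hl1pos hl0.1
    have hT : Tendsto (fLag P ξ I) (nhdsWithin l0 (Icc l1 l2)) (𝓝 (fLag P ξ I l0)) := by
      refine tendsto_lintegral_filter_of_dominated_convergence
        (fun ω => ENNReal.ofReal (I (l1 * ξ ω) * ξ ω))
        (Eventually.of_forall fun l => hFmeas l) ?_ (hfint l1 hl1pos).ne ?_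
      · filter_upwards [eventually_mem_nhdsWithin] with l hl
        filter_upwards [hξpos] with ω hω
        exact ENNReal.ofReal_le_ofReal (mul_le_mul_of_nonneg_right
          (hIanti (mul_pos hl1pos hω) (mul_le_mul_of_nonneg_right hl.1 hω.le)) hω.le)
      · filter_upwards [hξpos] with ω hω
        have hc : ContinuousAt (fun l : ℝ => ENNReal.ofReal (I (l * ξ ω) * ξ ω)) l0 := by
          refine ENNReal.continuous_ofReal.continuousAt.comp ?_
          refine ContinuousAt.mul ?_ continuousAt_const
          have hmul : ContinuousAt (fun l : ℝ => l * ξ ω) l0 :=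
            (continuous_mul_right (ξ ω)).continuousAt
          exact ContinuousAt.comp (hIcont (l0 * ξ ω) (mul_pos hl0pos hω)) hmul
        exact hc.continuousWithinAt
    exact hT
  -- intermediate value theorem
  obtain ⟨lam, hlammem, hlam⟩ : ∃ lam ∈ Icc l1 l2, fLag P ξ I lam = ENNReal.ofReal a := by
    have hle : l1 ≤ l2 := le_trans hl11 hl21
    have := intermediate_value_Icc' hle hcont (mem_Icc.mpr ⟨hl2small, hl1big⟩)
    obtain ⟨lam, hmem, heq⟩ := this
    exact ⟨lam, hmem, heq⟩
  have hlampos : 0 < lam := lt_of_lt_of_le hl1pos hlammem.1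
  set X : Ω → ℝ := fun ω => I (lam * ξ ω) with hX
  have hXmeas : Measurable X := hI_meas.comp (hξmeas.const_mul lam)
  have hXpos : ∀ᵐ ω ∂P, 0 < X ω := by
    filter_upwards [hξpos] with ω hω
    exact hI_pos _ (mul_pos hlampos hω)
  have hXbudget : ∫⁻ ω, ENNReal.ofReal (X ω * ξ ω) ∂P = ENNReal.ofReal a := hlam
  -- pointwise comparison
  have hptwise : ∀ Y : Ω → ℝ, (∀ᵐ ω ∂P, 0 ≤ Y ω) → ∀ᵐ ω ∂P,
      ENNReal.ofReal (u (Y ω)) + ENNReal.ofReal (lam * (X ω * ξ ω)) ≤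
      ENNReal.ofReal (u (X ω)) + ENNReal.ofReal (lam * (Y ω * ξ ω)) := by
    intro Y hY0
    filter_upwards [hY0, hξpos] with ω hYω hξω
    have hXω : 0 < X ω := hI_pos _ (mul_pos hlampos hξω)
    have hderiv : u' (X ω) = lam * ξ ω := hI_right _ (mul_pos hlampos hξω)
    have htang := tangent_le hu_conc hu_deriv hXω hYω
    rw [hderiv] at htang
    have hreal : u (Y ω) + lam * (X ω * ξ ω) ≤ u (X ω) + lam * (Y ω * ξ ω) := by nlinarith
    have h1 : 0 ≤ u (Y ω) := hu_nonneg _ hYω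
    have h2 : 0 ≤ lam * (X ω * ξ ω) := by positivity
    have h3 : 0 ≤ u (X ω) := hu_nonneg _ hXω.le
    have h4 : 0 ≤ lam * (Y ω * ξ ω) := by positivity
    rw [← ENNReal.ofReal_add h1 h2, ← ENNReal.ofReal_add h3 h4]
    exact ENNReal.ofReal_le_ofReal hreal
  -- the lintegral of the multiplier term
  have hsum : ∀ Y : Ω → ℝ,
      (∫⁻ ω, ENNReal.ofReal (Y ω * ξ ω) ∂P = ENNReal.ofReal a) →
      ∫⁻ ω, ENNReal.ofReal (lam * (Y ω * ξ ω)) ∂P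
        = ENNReal.ofReal lam * ENNReal.ofReal a := by
    intro Y hb
    simp_rw [ENNReal.ofReal_mul hlampos.le]
    rw [lintegral_const_mul' _ _ ENNReal.ofReal_ne_top, hb]
  have hmulfin : ENNReal.ofReal lam * ENNReal.ofReal a ≠ ⊤ :=
    ENNReal.mul_ne_top ENNReal.ofReal_ne_top ENNReal.ofReal_ne_top
  have hXopt : IsOptimal P ξ u a X := by
    refine ⟨hXmeas, ?_, hXbudget, ?_⟩
    · filter_upwards [hXpos] with ω h using h.le
    · intro Y hYmeas hY0 hYb
      have hmY : Measurable fun ω => ENNReal.ofReal (u (Y ω)) :=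
        (hu_meas.comp hYmeas).ennreal_ofReal
      have hmX : Measurable fun ω => ENNReal.ofReal (u (X ω)) :=
        (hu_meas.comp hXmeas).ennreal_ofReal
      have hmono := lintegral_mono_ae (hptwise Y hY0)
      rw [lintegral_add_left hmY, lintegral_add_left hmX,
        hsum Y hYb, hsum X hXbudget] at hmono
      exact (ENNReal.add_le_add_iff_right hmulfin).mp hmono
  refine ⟨X, hXopt, ?_⟩
  -- uniqueness
  intro Y hYopt
  obtain ⟨hYmeas, hY0, hYb, hYbest⟩ := hYopt
  have hXfin : ∫⁻ ω, ENNReal.ofReal (u (X ω)) ∂P < ⊤ := huint lam hlampos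
  have hequ : ∫⁻ ω, ENNReal.ofReal (u (Y ω)) ∂P = ∫⁻ ω, ENNReal.ofReal (u (X ω)) ∂P := by
    refine le_antisymm (hXopt.2.2.2 Y hYmeas hY0 hYb) ?_
    exact hYbest X hXmeas (by filter_upwards [hXpos] with ω h using h.le) hXbudget
  set F : Ω → ℝ≥0∞ := fun ω => ENNReal.ofReal (u (Y ω)) + ENNReal.ofReal (lam * (X ω * ξ ω))
    with hF
  set G : Ω → ℝ≥0∞ := fun ω => ENNReal.ofReal (u (X ω)) + ENNReal.ofReal (lam * (Y ω * ξ ω))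
    with hG
  have hmY : Measurable fun ω => ENNReal.ofReal (u (Y ω)) :=
    (hu_meas.comp hYmeas).ennreal_ofReal
  have hmX : Measurable fun ω => ENNReal.ofReal (u (X ω)) :=
    (hu_meas.comp hXmeas).ennreal_ofReal
  have hmXb : Measurable fun ω => ENNReal.ofReal (lam * (X ω * ξ ω)) :=
    ((hXmeas.mul hξmeas).const_mul lam).ennreal_ofReal
  have hmYb : Measurable fun ω => ENNReal.ofReal (lam * (Y ω * ξ ω)) :=
    ((hYmeas.mul hξmeas).const_mul lam).ennreal_ofReal
  have hFmeas' : Measurable F := hmY.add hmXb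
  have hGmeas' : Measurable G := hmX.add hmYb
  have hFG : F ≤ᵐ[P] G := hptwise Y hY0
  have hFeq : ∫⁻ ω, F ω ∂P = ∫⁻ ω, G ω ∂P := by
    rw [hF, hG]
    simp only
    rw [lintegral_add_left hmY, lintegral_add_left hmX,
      hsum Y hYb, hsum X hXbudget, hequ]
  have hFfin : ∫⁻ ω, F ω ∂P ≠ ⊤ := by
    rw [hF]
    simp only
    rw [lintegral_add_left hmY, hsum X hXbudget, hequ]
    exact (ENNReal.add_lt_top.mpr ⟨hXfin, Ne.lt_top hmulfin⟩).ne
  have hsub : ∫⁻ ω, (G ω - F ω) ∂P = 0 := by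
    rw [lintegral_sub hFmeas' hFfin hFG, hFeq]
    simp
  have hGF0 : ∀ᵐ ω ∂P, G ω - F ω = 0 := by
    have := (lintegral_eq_zero_iff' ((hGmeas'.sub hFmeas').aemeasurable)).mp hsub
    filter_upwards [this] with ω h using h
  have hFGeq : ∀ᵐ ω ∂P, F ω = G ω := by
    filter_upwards [hGF0, hFG] with ω h1 h2
    exact le_antisymm h2 (tsub_eq_zero_iff_le.mp h1)
  filter_upwards [hFGeq, hY0, hξpos] with ω heq hYω hξω
  have hXω : 0 < X ω := hI_pos _ (mul_pos hlampos hξω)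
  have h1 : 0 ≤ u (Y ω) := hu_nonneg _ hYω
  have h2 : 0 ≤ lam * (X ω * ξ ω) := by positivity
  have h3 : 0 ≤ u (X ω) := hu_nonneg _ hXω.le
  have h4 : 0 ≤ lam * (Y ω * ξ ω) := by positivity
  rw [hF, hG] at heq
  simp only at heq
  rw [← ENNReal.ofReal_add h1 h2, ← ENNReal.ofReal_add h3 h4,
    ENNReal.ofReal_eq_ofReal_iff (by linarith) (by linarith)] at heq
  by_contra hne
  have hderiv : u' (X ω) = lam * ξ ω := hI_right _ (mul_pos hlampos hξω)
  have htang := tangent_lt hu_conc hu_deriv hXω hYω hne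
  rw [hderiv] at htang
  nlinarith
end

section
/- Let u(x)=√x for 0≤x≤1 and u(x)=1−ln 2+ln(1+x) for x>1, so that I(y)=(u')^{-1}(y) equals 1/y − 1 for 0<y≤1/2 and 1/(4y²) for y>1/2, and let ξ be a random variable with ξ>0 a.s. and E[ln(1/ξ)]=+∞. Then: (a) f(λ)=E[I(λξ)ξ] ≤ 3/(2λ) < +∞ for every λ>0, so a Lagrange multiplier exists for every a>0; and (b) E[u(I(λξ))]=+∞ for every λ>0; consequently V(a)=+∞ for every a>0, i.e., the problem is ill-posed even though the Lagrange multiplier exists for every a>0. -/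
open MeasureTheory Filter Set
open scoped ENNReal

/-- The utility function of Example `vinfinite`: `u(x) = √x` on `[0,1]` and
`u(x) = 1 - ln 2 + ln (1+x)` for `x > 1`. -/
noncomputable def uEx : ℝ → ℝ :=
  fun x => if x ≤ 1 then Real.sqrt x else 1 - Real.log 2 + Real.log (1 + x)

/-- The inverse of the marginal utility `uEx'`: `I(y) = 1/y - 1` for `0 < y ≤ 1/2`
and `I(y) = 1/(4y²)` for `y > 1/2`. -/
noncomputable def IEx : ℝ → ℝ :=
  fun y => if y ≤ 1 / 2 then 1 / y - 1 else 1 / (4 * y ^ 2)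

lemma IEx_of_le {y : ℝ} (h : y ≤ 1/2) : IEx y = 1/y - 1 := if_pos h
lemma IEx_of_gt {y : ℝ} (h : 1/2 < y) : IEx y = 1/(4*y^2) := if_neg (not_le.2 h)
lemma uEx_of_le {x : ℝ} (h : x ≤ 1) : uEx x = Real.sqrt x := if_pos h
lemma uEx_of_gt {x : ℝ} (h : 1 < x) : uEx x = 1 - Real.log 2 + Real.log (1+x) := if_neg (not_le.2 h)

noncomputable def gEx : ℝ → ℝ := fun y => 1 - Real.log 2 + Real.log (1 + y)

lemma hasDerivAt_gEx {x : ℝ} (hx : 0 < x) : HasDerivAt gEx (1/(1+x)) x := by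
  have h1 : (1:ℝ) + x ≠ 0 := by linarith
  have : HasDerivAt (fun y : ℝ => Real.log (1 + y)) ((1+x)⁻¹ * 1) x := by
    exact (Real.hasDerivAt_log h1).comp x ((hasDerivAt_id x).const_add 1)
  rw [one_div, ← mul_one (1+x)⁻¹]; exact this.const_add (1 - Real.log 2)

lemma uEx_eq_gEx_on_Ici {x : ℝ} (hx : 1 ≤ x) : uEx x = gEx x := by
  rcases eq_or_lt_of_le hx with h | h
  · subst h
    have : (1:ℝ)+1 = 2 := by norm_num
    simp [uEx, gEx, this]
  · rw [uEx_of_gt h]; rfl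

lemma hasDerivAt_uEx_lt {x : ℝ} (h0 : 0 < x) (h1 : x < 1) :
    HasDerivAt uEx (1 / (2 * Real.sqrt x)) x := by
  have : uEx =ᶠ[nhds x] Real.sqrt := by
    filter_upwards [Iio_mem_nhds h1] with y hy
    exact uEx_of_le (le_of_lt hy)
  exact (Real.hasDerivAt_sqrt h0.ne').congr_of_eventuallyEq this

lemma hasDerivAt_uEx_gt {x : ℝ} (h1 : 1 < x) :
    HasDerivAt uEx (1 / (1 + x)) x := by
  have : uEx =ᶠ[nhds x] gEx := by
    filter_upwards [Ioi_mem_nhds h1] with y hy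
    exact uEx_eq_gEx_on_Ici (le_of_lt hy)
  exact (hasDerivAt_gEx (by linarith)).congr_of_eventuallyEq this

lemma hasDerivAt_uEx_one : HasDerivAt uEx (1/2) 1 := by
  have hs : HasDerivWithinAt uEx (1/2) (Iic 1) 1 := by
    have := (Real.hasDerivAt_sqrt one_ne_zero).hasDerivWithinAt (s := Iic (1:ℝ))
    rw [Real.sqrt_one] at this
    refine this.congr (fun y hy => uEx_of_le hy) (uEx_of_le le_rfl) |>.congr_deriv ?_
    norm_num
  have ht : HasDerivWithinAt uEx (1/2) (Ici 1) 1 := by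
    have := (hasDerivAt_gEx one_pos).hasDerivWithinAt (s := Ici (1:ℝ))
    refine this.congr (fun y hy => uEx_eq_gEx_on_Ici hy) (uEx_eq_gEx_on_Ici le_rfl) |>.congr_deriv ?_
    norm_num
  have := hs.union ht
  rw [Iic_union_Ici] at this
  exact this.hasDerivAt (by simp)

lemma deriv_uEx_IEx {y : ℝ} (hy : 0 < y) : deriv uEx (IEx y) = y := by
  rcases lt_trichotomy y (1/2) with h | h | h
  · rw [IEx_of_le h.le]
    have h2 : 2 < 1/y := by rw [lt_div_iff₀ hy]; linarith
    have hx : (1:ℝ) < 1/y - 1 := by linarith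
    rw [(hasDerivAt_uEx_gt hx).deriv]
    field_simp; ring
  · subst h
    have : IEx (1/2) = 1 := by rw [IEx_of_le le_rfl]; norm_num
    rw [this, hasDerivAt_uEx_one.deriv]
  · rw [IEx_of_gt h]
    have hy2 : (1:ℝ) < 4*y^2 := by nlinarith
    have hx0 : (0:ℝ) < 1/(4*y^2) := by positivity
    have hx1 : 1/(4*y^2) < 1 := by rw [div_lt_one (by linarith)]; exact hy2
    rw [(hasDerivAt_uEx_lt hx0 hx1).deriv]
    have hs : Real.sqrt (1/(4*y^2)) = 1/(2*y) := by
      rw [show (1:ℝ)/(4*y^2) = (1/(2*y))^2 by field_simp; ring]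
      exact Real.sqrt_sq (by positivity)
    rw [hs]; field_simp

lemma IEx_nonneg {y : ℝ} (hy : 0 < y) : 0 ≤ IEx y := by
  rcases le_or_gt y (1/2) with h | h
  · rw [IEx_of_le h]
    have : 2 ≤ 1/y := by rw [le_div_iff₀ hy]; linarith
    linarith
  · rw [IEx_of_gt h]; positivity

lemma uEx_nonneg {x : ℝ} (hx : 0 ≤ x) : 0 ≤ uEx x := by
  rcases le_or_gt x 1 with h | h
  · rw [uEx_of_le h]; exact Real.sqrt_nonneg x
  · rw [uEx_of_gt h]
    have h2 : Real.log 2 ≤ Real.log (1+x) := Real.log_le_log (by norm_num) (by linarith)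
    linarith

lemma measurable_IEx : Measurable IEx := by
  unfold IEx
  refine Measurable.ite (measurableSet_le measurable_id measurable_const) ?_ ?_
  · simp only [one_div]; exact measurable_inv.sub measurable_const
  · simp only [one_div]; exact ((measurable_id.pow_const 2).const_mul 4).inv

lemma measurable_uEx : Measurable uEx := by
  unfold uEx
  refine Measurable.ite (measurableSet_le measurable_id measurable_const) ?_ ?_
  · exact Real.continuous_sqrt.measurable
  · exact measurable_const.add (Real.measurable_log.comp (measurable_const.add measurable_id))

lemma IEx_mul_nonneg {lam t : ℝ} (hl : 0 < lam) (ht : 0 < t) :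
    0 ≤ IEx (lam * t) * t :=
  mul_nonneg (IEx_nonneg (mul_pos hl ht)) ht.le

lemma IEx_mul_le {lam t : ℝ} (hl : 0 < lam) (ht : 0 < t) :
    IEx (lam * t) * t ≤ 3 / (2 * lam) := by
  rcases le_or_gt (lam * t) (1/2) with h | h
  · rw [IEx_of_le h]
    have : (1/(lam*t) - 1) * t = 1/lam - t := by field_simp
    rw [this]
    have : 1/lam ≤ 3/(2*lam) := by
      rw [div_le_div_iff₀ hl (by linarith)]; nlinarith
    linarith
  · rw [IEx_of_gt h]
    have hlt : 0 < lam * t := by linarith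
    have : 1/(4*(lam*t)^2) * t = 1/(4*lam^2*t) := by field_simp
    rw [this]
    have h2 : 1/(2*lam) < t := by rw [div_lt_iff₀ (by linarith)]; nlinarith
    have : 1/(4*lam^2*t) ≤ 1/(2*lam) := by
      rw [div_le_div_iff₀ (by positivity) (by linarith)]
      nlinarith
    have h3 : 1/(2*lam) ≤ 3/(2*lam) := by
      apply div_le_div_of_nonneg_right ?_ (by linarith) |>.trans_eq rfl
      · norm_num
    linarith [this.trans h3]

lemma log_le_uEx {lam t : ℝ} (hl : 0 < lam) (ht : 0 < t) :
    Real.log (1/t) ≤ uEx (IEx (lam * t)) + (Real.log 2 + max (Real.log lam) 0) := by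
  have hlt : 0 < lam * t := mul_pos hl ht
  rcases le_or_gt (lam * t) (1/2) with h | h
  · have h2 : 2 ≤ 1/(lam*t) := by rw [le_div_iff₀ hlt]; linarith
    rw [IEx_of_le h]
    rcases le_or_gt (1/(lam*t) - 1) 1 with hI | hI
    · have he : 1/(lam*t) = 2 := le_antisymm (by linarith) h2
      have ht' : lam * t = 1/2 := by
        field_simp at he; linarith
      rw [uEx_of_le hI]
      have h1 : (1:ℝ) ≤ 1/(lam*t) - 1 := by linarith
      have hs : 1 ≤ Real.sqrt (1/(lam*t) - 1) :=
        calc (1:ℝ) = Real.sqrt 1 := Real.sqrt_one.symm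
        _ ≤ _ := Real.sqrt_le_sqrt h1
      have hlog : Real.log (1/t) = Real.log 2 + Real.log lam := by
        have : 1/t = 2*lam := by
          field_simp
          field_simp at ht'
          linarith
        rw [this, Real.log_mul (by norm_num) hl.ne']
      rw [hlog]
      have := le_max_left (Real.log lam) 0
      linarith
    · rw [uEx_of_gt hI]
      have hadd : 1 + (1/(lam*t) - 1) = 1/(lam*t) := by ring
      rw [hadd]
      have : Real.log (1/(lam*t)) = Real.log (1/lam) + Real.log (1/t) := by
        rw [← Real.log_mul (by positivity) (by positivity)]
        congr 1
        field_simp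
      rw [this]
      have h1 : Real.log (1/lam) = - Real.log lam := by
        rw [one_div, Real.log_inv]
      have := le_max_left (Real.log lam) 0
      linarith
  · have hI := IEx_nonneg hlt
    have hu := uEx_nonneg (x := IEx (lam*t)) hI
    have h2 : 1/t < 2*lam := by rw [div_lt_iff₀ ht]; nlinarith
    have h3 : Real.log (1/t) ≤ Real.log (2*lam) := by
      have h4 : (0:ℝ) < 1/t := by positivity
      exact Real.log_le_log h4 h2.le
    have h5 : Real.log (2*lam) = Real.log 2 + Real.log lam :=
      Real.log_mul (by norm_num) hl.ne'
    have := le_max_left (Real.log lam) 0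
    linarith

lemma continuousAt_IEx {y : ℝ} (hy : 0 < y) : ContinuousAt IEx y := by
  rcases lt_trichotomy y (1/2) with h | h | h
  · have he : IEx =ᶠ[nhds y] (fun z => 1/z - 1) := by
      filter_upwards [Iio_mem_nhds h] with z hz
      exact IEx_of_le (le_of_lt hz)
    exact ((continuousAt_const.div continuousAt_id hy.ne').sub continuousAt_const).congr he.symm
  · subst h
    have h1 : ContinuousWithinAt IEx (Iic (1/2)) (1/2) := by
      have hc : ContinuousWithinAt (fun z : ℝ => 1/z - 1) (Iic (1/2)) (1/2) :=
        ((continuousAt_const.div continuousAt_id (by norm_num)).sub continuousAt_const).continuousWithinAt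
      exact hc.congr (fun z hz => IEx_of_le hz) (IEx_of_le le_rfl)
    have h2 : ContinuousWithinAt IEx (Ici (1/2)) (1/2) := by
      have hc : ContinuousWithinAt (fun z : ℝ => 1/(4*z^2)) (Ici (1/2)) (1/2) :=
        (continuousAt_const.div (by fun_prop) (by norm_num)).continuousWithinAt
      refine hc.congr (fun z hz => ?_) ?_
      · rcases eq_or_lt_of_le (mem_Ici.mp hz) with h | h
        · rw [← h, IEx_of_le le_rfl]; norm_num
        · exact IEx_of_gt h
      · rw [IEx_of_le le_rfl]; norm_num
    have := h1.union h2
    rw [Iic_union_Ici] at this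
    rwa [continuousWithinAt_univ] at this
  · have he : IEx =ᶠ[nhds y] (fun z => 1/(4*z^2)) := by
      filter_upwards [Ioi_mem_nhds h] with z hz
      exact IEx_of_gt hz
    exact ((continuousAt_const.div (by fun_prop) (by positivity)).congr he.symm)

section Main
variable {Ω : Type*} [MeasurableSpace Ω] (P : Measure Ω) [IsProbabilityMeasure P]
  (ξ : Ω → ℝ)

lemma measF (hξmeas : Measurable ξ) (lam : ℝ) :
    Measurable (fun ω => IEx (lam * ξ ω) * ξ ω) :=
  (measurable_IEx.comp (hξmeas.const_mul lam)).mul hξmeas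

lemma intF (hξmeas : Measurable ξ) (hξpos : ∀ᵐ ω ∂P, 0 < ξ ω) {lam : ℝ} (hl : 0 < lam) :
    Integrable (fun ω => IEx (lam * ξ ω) * ξ ω) P := by
  refine Integrable.mono' (integrable_const (3/(2*lam)))
    (measF ξ hξmeas lam).aestronglyMeasurable ?_
  filter_upwards [hξpos] with ω hω
  rw [Real.norm_eq_abs, abs_of_nonneg (IEx_mul_nonneg hl hω)]
  exact IEx_mul_le hl hω

lemma fLag_eq (hξmeas : Measurable ξ) (hξpos : ∀ᵐ ω ∂P, 0 < ξ ω) {lam : ℝ} (hl : 0 < lam) :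
    fLag P ξ IEx lam = ENNReal.ofReal (∫ ω, IEx (lam * ξ ω) * ξ ω ∂P) := by
  rw [ofReal_integral_eq_lintegral_ofReal (intF P ξ hξmeas hξpos hl)
    (by filter_upwards [hξpos] with ω hω; exact IEx_mul_nonneg hl hω)]
  rfl

lemma flag_le (hξpos : ∀ᵐ ω ∂P, 0 < ξ ω) {lam : ℝ} (hl : 0 < lam) :
    fLag P ξ IEx lam ≤ ENNReal.ofReal (3 / (2 * lam)) := by
  unfold fLag
  calc ∫⁻ ω, ENNReal.ofReal (IEx (lam * ξ ω) * ξ ω) ∂P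
      ≤ ∫⁻ _, ENNReal.ofReal (3/(2*lam)) ∂P := by
        refine lintegral_mono_ae ?_
        filter_upwards [hξpos] with ω hω
        exact ENNReal.ofReal_le_ofReal (IEx_mul_le hl hω)
    _ = ENNReal.ofReal (3/(2*lam)) := by rw [lintegral_const, measure_univ, mul_one]

lemma contG (hξmeas : Measurable ξ) (hξpos : ∀ᵐ ω ∂P, 0 < ξ ω) {lam₀ : ℝ} (hl : 0 < lam₀) :
    ContinuousAt (fun lam => ∫ ω, IEx (lam * ξ ω) * ξ ω ∂P) lam₀ := by
  refine continuousAt_of_dominated (bound := fun _ => 3/lam₀) ?_ ?_ ?_ ?_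
  · exact Eventually.of_forall fun lam => (measF ξ hξmeas lam).aestronglyMeasurable
  · filter_upwards [Ioi_mem_nhds (show lam₀/2 < lam₀ by linarith)] with lam hlam
    filter_upwards [hξpos] with ω hω
    have hlam' : 0 < lam := lt_trans (by linarith) hlam
    rw [Real.norm_eq_abs, abs_of_nonneg (IEx_mul_nonneg hlam' hω)]
    refine (IEx_mul_le hlam' hω).trans ?_
    rw [div_le_div_iff₀ (by linarith) hl]
    rw [mem_Ioi] at hlam
    nlinarith
  · exact integrable_const _
  · filter_upwards [hξpos] with ω hω
    exact ((continuousAt_IEx (show 0 < lam₀ * ξ ω from mul_pos hl hω)).comp (f := fun l => l * ξ ω) (x := lam₀)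
      ((continuous_id.mul continuous_const).continuousAt (x := lam₀))).mul continuousAt_const

lemma exists_lam (hξmeas : Measurable ξ) (hξpos : ∀ᵐ ω ∂P, 0 < ξ ω) {a : ℝ} (ha : 0 < a) :
    ∃ lam : ℝ, 0 < lam ∧ fLag P ξ IEx lam = ENNReal.ofReal a := by
  set g : ℝ → ℝ := fun lam => ∫ ω, IEx (lam * ξ ω) * ξ ω ∂P with hg
  -- find n with P {ξ ≤ n} > 1/2
  have hmono : Monotone (fun n : ℕ => {ω | ξ ω ≤ (n:ℝ)}) := by
    intro m n hmn ω hω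
    simp only [mem_setOf_eq] at *
    exact le_trans hω (Nat.cast_le.mpr hmn)
  have hunion : (⋃ n : ℕ, {ω | ξ ω ≤ (n:ℝ)}) = univ := by
    ext ω; simp only [mem_iUnion, mem_setOf_eq, mem_univ, iff_true]
    obtain ⟨n, hn⟩ := exists_nat_ge (ξ ω)
    exact ⟨n, hn⟩
  have htend := tendsto_measure_iUnion_atTop (μ := P) hmono
  rw [hunion, measure_univ] at htend
  have hev : ∀ᶠ n : ℕ in atTop, (1:ℝ≥0∞)/2 < P {ω | ξ ω ≤ (n:ℝ)} :=
    htend.eventually (eventually_gt_nhds (by norm_num))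
  obtain ⟨n, hn⟩ := hev.exists
  set s : Set Ω := {ω | ξ ω ≤ (n:ℝ)} with hs
  have hPs : (1:ℝ)/2 ≤ (P s).toReal := by
    have := ENNReal.toReal_mono (measure_ne_top P s) hn.le
    simpa [ENNReal.toReal_div] using this
  set M : ℝ := (n:ℝ) + 1 with hM
  have hMpos : 0 < M := by positivity
  set lam₁ : ℝ := min (1/(2*M)) (1/(4*a)) with hlam₁
  have hl1pos : 0 < lam₁ := lt_min (by positivity) (by positivity)
  have hl1M : M ≤ 1/(2*lam₁) := by
    have h := min_le_left (1/(2*M)) (1/(4*a))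
    rw [le_div_iff₀ (by positivity)]
    have : 2 * M * lam₁ ≤ 2 * M * (1/(2*M)) :=
      mul_le_mul_of_nonneg_left h (by positivity)
    calc M * (2*lam₁) = 2 * M * lam₁ := by ring
      _ ≤ 2 * M * (1/(2*M)) := this
      _ = 1 := by field_simp
  have hl1a : a ≤ 1/(4*lam₁) := by
    have h := min_le_right (1/(2*M)) (1/(4*a))
    rw [le_div_iff₀ (by positivity)]
    have : 4 * a * lam₁ ≤ 4 * a * (1/(4*a)) :=
      mul_le_mul_of_nonneg_left h (by positivity)
    calc a * (4*lam₁) = 4 * a * lam₁ := by ring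
      _ ≤ 4 * a * (1/(4*a)) := this
      _ = 1 := by field_simp
  -- lower bound for g lam₁
  set t : Set Ω := {ω | ξ ω ≤ 1/(2*lam₁)} with hts
  have htmeas : MeasurableSet t := measurableSet_le hξmeas measurable_const
  have hst : s ⊆ t := by
    intro ω hω
    exact le_trans hω (le_trans (by simp [hM]) hl1M)
  have hind : ∀ᵐ ω ∂P, t.indicator (fun _ => 1/(2*lam₁)) ω ≤ IEx (lam₁ * ξ ω) * ξ ω := by
    filter_upwards [hξpos] with ω hω
    by_cases hmem : ω ∈ t
    · rw [indicator_of_mem hmem]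
      have hξle : ξ ω ≤ 1/(2*lam₁) := hmem
      have hle2 : lam₁ * ξ ω ≤ 1/2 := by
        calc lam₁ * ξ ω ≤ lam₁ * (1/(2*lam₁)) := mul_le_mul_of_nonneg_left hξle hl1pos.le
          _ = 1/2 := by field_simp
      rw [IEx_of_le hle2]
      have : (1/(lam₁ * ξ ω) - 1) * ξ ω = 1/lam₁ - ξ ω := by
        field_simp
      rw [this]
      have : 1/(2*lam₁) = 1/lam₁ - 1/(2*lam₁) := by
        ring
      linarith
    · rw [indicator_of_notMem hmem]
      exact IEx_mul_nonneg hl1pos hω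
  have hintind : Integrable (t.indicator (fun _ => 1/(2*lam₁))) P :=
    (integrable_const _).indicator htmeas
  have hglow : a ≤ g lam₁ := by
    have h1 := integral_mono_ae hintind (intF P ξ hξmeas hξpos hl1pos) hind
    rw [integral_indicator_const _ htmeas] at h1
    have h2 : (P s).toReal ≤ (P t).toReal :=
      ENNReal.toReal_mono (measure_ne_top P t) (measure_mono hst)
    have h3 : (1/2 : ℝ) * (1/(2*lam₁)) ≤ (P t).toReal * (1/(2*lam₁)) := by
      apply mul_le_mul_of_nonneg_right (le_trans hPs h2) (by positivity)
    have h4 : (1/2 : ℝ) * (1/(2*lam₁)) = 1/(4*lam₁) := by field_simp; ring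
    rw [smul_eq_mul] at h1
    calc a ≤ 1/(4*lam₁) := hl1a
      _ = (1/2) * (1/(2*lam₁)) := h4.symm
      _ ≤ (P t).toReal * (1/(2*lam₁)) := h3
      _ ≤ g lam₁ := h1
  -- upper bound for g lam₂
  set lam₂ : ℝ := max lam₁ (3/(2*a)) with hlam₂
  have hl2pos : 0 < lam₂ := lt_of_lt_of_le hl1pos (le_max_left _ _)
  have hl12 : lam₁ ≤ lam₂ := le_max_left _ _
  have hghigh : g lam₂ ≤ a := by
    have h1 : g lam₂ ≤ ∫ _, 3/(2*lam₂) ∂P := by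
      refine integral_mono_ae (intF P ξ hξmeas hξpos hl2pos) (integrable_const _) ?_
      filter_upwards [hξpos] with ω hω
      exact IEx_mul_le hl2pos hω
    rw [integral_const, probReal_univ, one_smul] at h1
    have h2 : 3/(2*a) ≤ lam₂ := le_max_right _ _
    have h3 : 3/(2*lam₂) ≤ a := by
      rw [div_le_iff₀ (by positivity)]
      have := mul_le_mul_of_nonneg_right h2 (show (0:ℝ) ≤ 2*a by positivity)
      calc (3:ℝ) = 3/(2*a) * (2*a) := by field_simp
        _ ≤ lam₂ * (2*a) := this
        _ = a * (2*lam₂) := by ring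
    linarith
  -- IVT
  have hcont : ContinuousOn g (Icc lam₁ lam₂) := fun x hx =>
    (contG P ξ hξmeas hξpos (lt_of_lt_of_le hl1pos hx.1)).continuousWithinAt
  have hmem : a ∈ Icc (g lam₂) (g lam₁) := ⟨hghigh, hglow⟩
  obtain ⟨lam, hlam, hglam⟩ := intermediate_value_Icc' hl12 hcont hmem
  exact ⟨lam, lt_of_lt_of_le hl1pos hlam.1,
    by rw [fLag_eq P ξ hξmeas hξpos (lt_of_lt_of_le hl1pos hlam.1)]
       exact congrArg ENNReal.ofReal hglam⟩

lemma part4 (hξmeas : Measurable ξ) (hξpos : ∀ᵐ ω ∂P, 0 < ξ ω)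
    (hlog : ∫⁻ ω, ENNReal.ofReal (Real.log (1 / ξ ω)) ∂P = ⊤)
    {lam : ℝ} (hl : 0 < lam) :
    ∫⁻ ω, ENNReal.ofReal (uEx (IEx (lam * ξ ω))) ∂P = ⊤ := by
  by_contra hne
  set C : ℝ := Real.log 2 + max (Real.log lam) 0 with hC
  have hb : ∫⁻ ω, ENNReal.ofReal (Real.log (1/ξ ω)) ∂P ≤
      ∫⁻ ω, (ENNReal.ofReal (uEx (IEx (lam * ξ ω))) + ENNReal.ofReal C) ∂P := by
    refine lintegral_mono_ae ?_
    filter_upwards [hξpos] with ω hω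
    calc ENNReal.ofReal (Real.log (1/ξ ω))
        ≤ ENNReal.ofReal (uEx (IEx (lam * ξ ω)) + C) :=
          ENNReal.ofReal_le_ofReal (log_le_uEx hl hω)
      _ ≤ ENNReal.ofReal (uEx (IEx (lam * ξ ω))) + ENNReal.ofReal C :=
          ENNReal.ofReal_add_le
  rw [lintegral_add_right _ measurable_const, lintegral_const, measure_univ, mul_one,
    hlog] at hb
  have : (⊤ : ℝ≥0∞) = ∫⁻ ω, ENNReal.ofReal (uEx (IEx (lam * ξ ω))) ∂P + ENNReal.ofReal C :=
    top_le_iff.mp hb |>.symm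
  exact hne (by
    have h2 := ENNReal.add_eq_top.mp this.symm
    rcases h2 with h | h
    · exact h
    · exact absurd h ENNReal.ofReal_ne_top)

lemma part5 (hξmeas : Measurable ξ) (hξpos : ∀ᵐ ω ∂P, 0 < ξ ω)
    (hlog : ∫⁻ ω, ENNReal.ofReal (Real.log (1 / ξ ω)) ∂P = ⊤)
    {a : ℝ} (ha : 0 < a) : Vval P ξ uEx a = ⊤ := by
  obtain ⟨lam, hl, hflag⟩ := exists_lam P ξ hξmeas hξpos ha
  rw [← top_le_iff]
  set X : Ω → ℝ := fun ω => IEx (lam * ξ ω) with hX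
  have hXmeas : Measurable X := measurable_IEx.comp (hξmeas.const_mul lam)
  have hXnn : ∀ᵐ ω ∂P, 0 ≤ X ω := by
    filter_upwards [hξpos] with ω hω
    exact IEx_nonneg (mul_pos hl hω)
  have hXcon : ∫⁻ ω, ENNReal.ofReal (X ω * ξ ω) ∂P = ENNReal.ofReal a := hflag
  calc (⊤:ℝ≥0∞) = ∫⁻ ω, ENNReal.ofReal (uEx (X ω)) ∂P :=
        (part4 P ξ hξmeas hξpos hlog hl).symm
    _ ≤ Vval P ξ uEx a :=
        le_iSup_of_le X (le_iSup_of_le hXmeas (le_iSup_of_le hXnn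
          (le_iSup_of_le hXcon le_rfl)))

end Main


theorem illposed_with_multiplier
    {Ω : Type*} [MeasurableSpace Ω] (P : Measure Ω) [IsProbabilityMeasure P]
    (ξ : Ω → ℝ) (hξmeas : Measurable ξ) (hξpos : ∀ᵐ ω ∂P, 0 < ξ ω)
    (hlog : ∫⁻ ω, ENNReal.ofReal (Real.log (1 / ξ ω)) ∂P = ⊤)
    :
    (∀ y : ℝ, 0 < y → deriv uEx (IEx y) = y) ∧
      (∀ lam : ℝ, 0 < lam →
        fLag P ξ IEx lam ≤ ENNReal.ofReal (3 / (2 * lam))) ∧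
      (∀ a : ℝ, 0 < a → ∃ lam : ℝ, 0 < lam ∧ fLag P ξ IEx lam = ENNReal.ofReal a) ∧
      (∀ lam : ℝ, 0 < lam →
        ∫⁻ ω, ENNReal.ofReal (uEx (IEx (lam * ξ ω))) ∂P = ⊤) ∧
      (∀ a : ℝ, 0 < a → Vval P ξ uEx a = ⊤) := by
  refine ⟨fun y hy => deriv_uEx_IEx hy,
    fun lam hl => flag_le P ξ hξpos hl,
    fun a ha => exists_lam P ξ hξmeas hξpos ha,
    fun lam hl => part4 P ξ hξmeas hξpos hlog hl,
    fun a ha => part5 P ξ hξmeas hξpos hlog ha⟩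
end
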